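/- arXiv:1906.01114 — 5 statements merged into one kernel-verified Lean document; each statement's English description precedes it below -/
import Mathlib

section
/- Let P be a compact subset of the Euclidean plane, and let s, t ∈ P. Then there exists an optimal pair for the min-max quickest pair-visibility problem: a pair (s*, t*) of points of P with segment ℝ s* t* ⊆ P such that for every pair (p, q) of points of P with segment ℝ p q ⊆ P one has max(d_P(s, s*), d_P(t, t*)) ≤ max(d_P(s, p), d_P(t, q)). -/
open scoped ENNReal

noncomputable abbrev E2 : Type := EuclideanSpace ℝ (Fin 2)

/-- The geodesic (intrinsic) distance in `P`: the infimum of path lengths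
(`eVariationOn γ Set.univ`) over continuous paths `γ : [0,1] → E` staying in `P`
from `x` to `y`; `∞` if no such finite-length path exists. -/
noncomputable def geoDist (P : Set E2) (x y : E2) : ℝ≥0∞ :=
  sInf { l : ℝ≥0∞ | ∃ γ : Set.Icc (0:ℝ) 1 → E2,
    Continuous γ ∧ Set.range γ ⊆ P ∧
    γ ⟨0, by norm_num⟩ = x ∧ γ ⟨1, by norm_num⟩ = y ∧
    eVariationOn γ Set.univ = l }

open Set
open scoped NNReal

lemma evar_small_right {f : ℝ → E2} {t : ℝ} (ht : t ∈ Icc (0:ℝ) 1) (ht1 : t < 1)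
    (hf : ContinuousWithinAt f (Icc (0:ℝ) 1) t) (hV : eVariationOn f (Icc (0:ℝ) 1) ≠ ⊤)
    {ε : ℝ≥0∞} (hε : 0 < ε) :
    ∃ t', t < t' ∧ t' ≤ 1 ∧ eVariationOn f (Icc (0:ℝ) 1 ∩ Icc t t') < ε := by
  set c : ℝ≥0∞ := ⨅ t' ∈ Ioc t 1, eVariationOn f (Icc (0:ℝ) 1 ∩ Icc t t') with hc_def
  rcases lt_or_ge c ε with hc | hc
  · rw [iInf_lt_iff] at hc
    obtain ⟨t', ht'⟩ := hc
    rw [iInf_lt_iff] at ht'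
    obtain ⟨ht'mem, h⟩ := ht'
    exact ⟨t', ht'mem.1, ht'mem.2, h⟩
  exfalso
  have hc0 : 0 < c := lt_of_lt_of_le hε hc
  have hcle : ∀ t' ∈ Ioc t 1, c ≤ eVariationOn f (Icc (0:ℝ) 1 ∩ Icc t t') := fun t' h =>
    iInf₂_le t' h
  have hne : ∀ a b : ℝ, eVariationOn f (Icc (0:ℝ) 1 ∩ Icc a b) ≠ ⊤ := fun a b =>
    ne_top_of_le_ne_top hV (eVariationOn.mono f inter_subset_left)
  have hcne : c ≠ ⊤ := ne_top_of_le_ne_top (hne t 1) (hcle 1 ⟨ht1, le_rfl⟩)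
  set δ : ℝ≥0∞ := c / 2 / 2 / 2 with hδ_def
  have hδ0 : 0 < δ := by
    simp only [hδ_def, ENNReal.div_pos_iff]
    refine ⟨?_, by norm_num⟩
    simp only [ne_eq, ENNReal.div_eq_zero_iff, not_or]
    norm_num
    exact hc0.ne'
  -- continuity: find t1
  have hball : f ⁻¹' EMetric.ball (f t) δ ∈ nhdsWithin t (Icc (0:ℝ) 1) :=
    hf (EMetric.ball_mem_nhds _ hδ0)
  rw [Metric.mem_nhdsWithin_iff] at hball
  obtain ⟨r, hr0, hr⟩ := hball
  set t1 : ℝ := min (t + r / 2) 1 with ht1_def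
  have htt1 : t < t1 := lt_min (by linarith) ht1
  have ht1le : t1 ≤ 1 := min_le_right _ _
  have hsmall : ∀ u ∈ Icc (0:ℝ) 1 ∩ Icc t t1, edist (f u) (f t) < δ := by
    rintro u ⟨hu1, hu2⟩
    have : u ∈ Metric.ball t r ∩ Icc (0:ℝ) 1 := by
      refine ⟨?_, hu1⟩
      rw [Metric.mem_ball, Real.dist_eq, abs_of_nonneg (by linarith [hu2.1])]
      have : u ≤ t + r / 2 := le_trans hu2.2 (min_le_left _ _)
      linarith
    exact hr this
  set A : ℝ≥0∞ := eVariationOn f (Icc (0:ℝ) 1 ∩ Icc t t1) with hA_def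
  have hcA : c ≤ A := hcle t1 ⟨htt1, ht1le⟩
  have hA0 : A ≠ 0 := fun h => by rw [h, le_zero_iff] at hcA; exact hc0.ne' hcA
  have heqA : A = eVariationOn f (Icc (0:ℝ) 1 ∩ Icc t t1) := hA_def
  have hsub : A - δ < A := ENNReal.sub_lt_self (hne t t1) hA0 hδ0.ne'
  nth_rewrite 2 [heqA] at hsub
  unfold eVariationOn at hsub
  obtain ⟨⟨n, u, hu, us⟩, hsum⟩ := lt_iSup_iff.mp hsub
  simp only at hsum
  by_cases hk : ∃ i, t < u i
  · set k := Nat.find hk with hk_def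
    have hk1 : t < u k := Nat.find_spec hk
    have heqt : ∀ i < k, u i = t := fun i h =>
      le_antisymm (not_lt.mp (Nat.find_min hk h)) (us i).2.1
    by_cases hkn : k ≤ n
    · have huk : u k ∈ Icc (0:ℝ) 1 ∩ Icc t t1 := us k
      set B := eVariationOn f (Icc (0:ℝ) 1 ∩ Icc (u k) t1) with hB_def
      have hBtop : B ≠ ⊤ := hne _ _
      have h1 : ∑ i ∈ Finset.range k, edist (f (u (i+1))) (f (u i)) ≤ δ := by
        by_cases hk0 : k = 0
        · simp [hk0]
        · rw [show k = (k-1)+1 by omega, Finset.sum_range_succ]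
          have hz : ∑ i ∈ Finset.range (k-1), edist (f (u (i+1))) (f (u i)) = 0 :=
            Finset.sum_eq_zero fun i hi => by
              have hij := Finset.mem_range.mp hi
              rw [heqt i (by omega), heqt (i+1) (by omega)]
              simp
          rw [hz, zero_add, heqt (k-1) (by omega), show (k-1)+1 = k by omega]
          exact (hsmall (u k) (us k)).le
      have h2 : ∑ i ∈ Finset.Ico k n, edist (f (u (i+1))) (f (u i)) ≤ B := by
        rw [Finset.sum_Ico_eq_sum_range]
        exact eVariationOn.sum_le (f := f) (n := n - k) (u := fun i => u (k + i))
          (fun a b hab => hu (by omega))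
          (fun i => ⟨(us (k+i)).1, hu (Nat.le_add_right k i), (us (k+i)).2.2⟩)
      have hS : ∑ i ∈ Finset.range n, edist (f (u (i+1))) (f (u i)) ≤ δ + B := by
        rw [Finset.range_eq_Ico, ← Finset.sum_Ico_consecutive _ (Nat.zero_le k) hkn,
          ← Finset.range_eq_Ico]
        exact add_le_add h1 h2
      have hadd : c + B ≤ A := by
        rw [heqA, ← eVariationOn.Icc_add_Icc f (le_of_lt hk1) huk.2.2 huk.1]
        exact add_le_add_left (hcle (u k) ⟨hk1, le_trans huk.2.2 ht1le⟩) B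
      have hδA : δ ≤ A :=
        (ENNReal.half_le_self.trans (ENNReal.half_le_self.trans
          (ENNReal.half_le_self.trans hcA)))
      have hδtop : δ ≠ ⊤ := ne_top_of_le_ne_top (hne t t1) hδA
      have hAS : A ≤ (δ + B) + δ :=
        le_trans ((ENNReal.sub_lt_iff_lt_right hδtop hδA).mp hsum).le
          (add_le_add_left hS δ)
      have hfin : c + B ≤ (c / 2 / 2) + B := by
        calc c + B ≤ (δ + B) + δ := le_trans hadd hAS
        _ = (δ + δ) + B := by ring
        _ = (c / 2 / 2) + B := by rw [ENNReal.add_halves]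
      have hcontra : c ≤ c / 2 / 2 :=
        (ENNReal.add_le_add_iff_right hBtop).mp hfin
      exact absurd (hcontra.trans_lt (lt_of_le_of_lt ENNReal.half_le_self
        (ENNReal.half_lt_self hc0.ne' hcne))) (lt_irrefl c)
    · have : ∑ i ∈ Finset.range n, edist (f (u (i+1))) (f (u i)) = 0 :=
        Finset.sum_eq_zero fun i hi => by
          have hij := Finset.mem_range.mp hi
          rw [heqt i (by omega), heqt (i+1) (by omega)]
          simp
      rw [this] at hsum
      simp at hsum
  · push_neg at hk
    have : ∑ i ∈ Finset.range n, edist (f (u (i+1))) (f (u i)) = 0 :=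
      Finset.sum_eq_zero fun i _ => by
        rw [le_antisymm (hk i) (us i).2.1, le_antisymm (hk (i+1)) (us (i+1)).2.1]
        simp
    rw [this] at hsum
    simp at hsum

lemma evar_small_left {f : ℝ → E2} {t : ℝ} (ht : t ∈ Icc (0:ℝ) 1) (ht0 : 0 < t)
    (hf : ContinuousWithinAt f (Icc (0:ℝ) 1) t) (hV : eVariationOn f (Icc (0:ℝ) 1) ≠ ⊤)
    {ε : ℝ≥0∞} (hε : 0 < ε) :
    ∃ t', 0 ≤ t' ∧ t' < t ∧ eVariationOn f (Icc (0:ℝ) 1 ∩ Icc t' t) < ε := by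
  set φ : ℝ → ℝ := fun x => 1 - x with hφ_def
  have hφa : ∀ s : Set ℝ, AntitoneOn φ s := fun s a _ b _ hab => by
    simp only [hφ_def]; linarith
  have hφI : φ '' Icc (0:ℝ) 1 = Icc (0:ℝ) 1 := by
    rw [show φ = fun x => 1 - x from rfl, image_const_sub_Icc]; norm_num
  have hinj : Function.Injective φ := fun a b h => by
    simp only [hφ_def] at h; linarith
  set g : ℝ → E2 := f ∘ φ with hg_def
  have hgV : eVariationOn g (Icc (0:ℝ) 1) ≠ ⊤ := by
    rw [hg_def, eVariationOn.comp_eq_of_antitoneOn f φ (hφa _), hφI]; exact hV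
  have hmem : (1 - t) ∈ Icc (0:ℝ) 1 := ⟨by linarith [ht.2], by linarith [ht.1]⟩
  have hgc : ContinuousWithinAt g (Icc (0:ℝ) 1) (1 - t) := by
    have hφc : ContinuousWithinAt φ (Icc (0:ℝ) 1) (1 - t) :=
      (continuous_const.sub continuous_id).continuousWithinAt
    have hmaps : MapsTo φ (Icc (0:ℝ) 1) (Icc (0:ℝ) 1) := fun u hu =>
      ⟨by simp only [hφ_def]; linarith [hu.2], by simp only [hφ_def]; linarith [hu.1]⟩
    have h1t : φ (1 - t) = t := by simp [hφ_def]
    exact ContinuousWithinAt.comp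
      (show ContinuousWithinAt f (Icc (0:ℝ) 1) (φ (1 - t)) by rw [h1t]; exact hf) hφc hmaps
  obtain ⟨t'', h1, h2, h3⟩ := evar_small_right hmem (by linarith) hgc hgV hε
  refine ⟨1 - t'', by linarith, by linarith, ?_⟩
  have himg : φ '' (Icc (0:ℝ) 1 ∩ Icc (1-t) t'') = Icc (0:ℝ) 1 ∩ Icc (1-t'') t := by
    rw [Set.image_inter hinj, hφI]
    congr 1
    rw [show φ = fun x => 1 - x from rfl, image_const_sub_Icc]
    congr 1 <;> ring
  calc eVariationOn f (Icc (0:ℝ) 1 ∩ Icc (1-t'') t)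
      = eVariationOn g (Icc (0:ℝ) 1 ∩ Icc (1-t) t'') := by
        rw [hg_def, eVariationOn.comp_eq_of_antitoneOn f φ (hφa _), himg]
    _ < ε := h3

lemma continuousOn_vft {f : ℝ → E2} (hf : ContinuousOn f (Icc (0:ℝ) 1))
    (hV : eVariationOn f (Icc (0:ℝ) 1) ≠ ⊤) :
    ContinuousOn (variationOnFromTo f (Icc (0:ℝ) 1) 0) (Icc (0:ℝ) 1) := by
  have hlbv : LocallyBoundedVariationOn f (Icc (0:ℝ) 1) :=
    BoundedVariationOn.locallyBoundedVariationOn hV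
  have hne : ∀ a b : ℝ, eVariationOn f (Icc (0:ℝ) 1 ∩ Icc a b) ≠ ⊤ := fun a b =>
    ne_top_of_le_ne_top hV (eVariationOn.mono f inter_subset_left)
  intro x hx
  rw [Metric.continuousWithinAt_iff]
  intro ε hε
  have hε' : (0:ℝ≥0∞) < ENNReal.ofReal ε := by simp [hε]
  -- right modulus
  have hright : ∃ δr > 0, ∀ y ∈ Icc (0:ℝ) 1, x ≤ y → y - x < δr →
      eVariationOn f (Icc (0:ℝ) 1 ∩ Icc x y) < ENNReal.ofReal ε := by
    rcases lt_or_ge x 1 with h1 | h1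
    · obtain ⟨t', ht1, ht2, ht3⟩ := evar_small_right hx h1 (hf x hx) hV hε'
      exact ⟨t' - x, by linarith, fun y hy hxy hlt =>
        lt_of_le_of_lt (eVariationOn.mono f (inter_subset_inter_right _
          (Icc_subset_Icc le_rfl (by linarith)))) ht3⟩
    · refine ⟨1, by norm_num, fun y hy hxy _ => ?_⟩
      have hyx : y = x := le_antisymm (hy.2.trans h1) hxy
      rw [hyx, Icc_self]
      have h0 : eVariationOn f (Icc (0:ℝ) 1 ∩ {x}) = 0 :=
        eVariationOn.subsingleton f (fun a ha b hb => by
          rw [Set.mem_singleton_iff.mp ha.2, Set.mem_singleton_iff.mp hb.2])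
      rw [h0]; exact hε'
  have hleft : ∃ δl > 0, ∀ y ∈ Icc (0:ℝ) 1, y ≤ x → x - y < δl →
      eVariationOn f (Icc (0:ℝ) 1 ∩ Icc y x) < ENNReal.ofReal ε := by
    rcases lt_or_ge 0 x with h1 | h1
    · obtain ⟨t', ht1, ht2, ht3⟩ := evar_small_left hx h1 (hf x hx) hV hε'
      exact ⟨x - t', by linarith, fun y hy hxy hlt =>
        lt_of_le_of_lt (eVariationOn.mono f (inter_subset_inter_right _
          (Icc_subset_Icc (by linarith) le_rfl))) ht3⟩
    · refine ⟨1, by norm_num, fun y hy hxy _ => ?_⟩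
      have hyx : y = x := le_antisymm hxy (h1.trans hy.1)
      rw [hyx, Icc_self]
      have h0 : eVariationOn f (Icc (0:ℝ) 1 ∩ {x}) = 0 :=
        eVariationOn.subsingleton f (fun a ha b hb => by
          rw [Set.mem_singleton_iff.mp ha.2, Set.mem_singleton_iff.mp hb.2])
      rw [h0]; exact hε'
  obtain ⟨δr, hδr, hR⟩ := hright
  obtain ⟨δl, hδl, hL⟩ := hleft
  refine ⟨min δl δr, lt_min hδl hδr, fun y hy hdist => ?_⟩
  have h0 : (0:ℝ) ∈ Icc (0:ℝ) 1 := by norm_num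
  rcases le_total x y with hxy | hxy
  · have key : eVariationOn f (Icc (0:ℝ) 1 ∩ Icc x y) < ENNReal.ofReal ε := by
      apply hR y hy hxy
      have h' : |y - x| < min δl δr := by rw [← Real.dist_eq]; exact hdist
      calc y - x ≤ |y - x| := le_abs_self _
        _ < min δl δr := h'
        _ ≤ δr := min_le_right _ _
    have hvv : variationOnFromTo f (Icc (0:ℝ) 1) 0 y
        - variationOnFromTo f (Icc (0:ℝ) 1) 0 x = variationOnFromTo f (Icc (0:ℝ) 1) x y := by
      rw [← variationOnFromTo.add hlbv h0 hx hy]; ring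
    rw [Real.dist_eq, hvv, abs_of_nonneg (variationOnFromTo.nonneg_of_le f _ hxy),
      variationOnFromTo.eq_of_le f _ hxy]
    exact ENNReal.toReal_lt_of_lt_ofReal key
  · have key : eVariationOn f (Icc (0:ℝ) 1 ∩ Icc y x) < ENNReal.ofReal ε := by
      apply hL y hy hxy
      have h' : |y - x| < min δl δr := by rw [← Real.dist_eq]; exact hdist
      calc x - y ≤ |y - x| := by rw [abs_sub_comm]; exact le_abs_self _
        _ < min δl δr := h'
        _ ≤ δl := min_le_left _ _
    have hvv : variationOnFromTo f (Icc (0:ℝ) 1) 0 y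
        - variationOnFromTo f (Icc (0:ℝ) 1) 0 x = variationOnFromTo f (Icc (0:ℝ) 1) x y := by
      rw [← variationOnFromTo.add hlbv h0 hx hy]; ring
    rw [Real.dist_eq, hvv, abs_of_nonpos (variationOnFromTo.nonpos_of_ge f _ hxy),
      ← variationOnFromTo.eq_neg_swap, variationOnFromTo.eq_of_le f _ hxy]
    exact ENNReal.toReal_lt_of_lt_ofReal key

lemma exists_lipschitz_path {P : Set E2} (γ : Set.Icc (0:ℝ) 1 → E2) (hγc : Continuous γ)
    (hγP : Set.range γ ⊆ P) {l : ℝ≥0∞} (hl : eVariationOn γ Set.univ = l) (hlt : l ≠ ⊤) :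
    ∃ σ : Set.Icc (0:ℝ) 1 → E2, LipschitzWith l.toNNReal σ ∧ Set.range σ ⊆ P ∧
      σ ⟨0, by norm_num⟩ = γ ⟨0, by norm_num⟩ ∧ σ ⟨1, by norm_num⟩ = γ ⟨1, by norm_num⟩ ∧
      eVariationOn σ Set.univ ≤ l := by
  classical
  set f : ℝ → E2 := fun x => γ (Set.projIcc 0 1 zero_le_one x) with hf_def
  have hfγ : f ∘ Subtype.val = γ := by
    funext x; simp only [hf_def, Function.comp_apply, Set.projIcc_val]
  have hcomp : eVariationOn f (Icc (0:ℝ) 1) = l := by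
    rw [← hl, ← hfγ, eVariationOn.comp_eq_of_monotoneOn f Subtype.val
      ((Subtype.strictMono_coe _).monotone.monotoneOn _)]
    congr 1
    rw [image_univ, Subtype.range_coe]
  have hbv : eVariationOn f (Icc (0:ℝ) 1) ≠ ⊤ := by rw [hcomp]; exact hlt
  have hlbv : LocallyBoundedVariationOn f (Icc (0:ℝ) 1) :=
    BoundedVariationOn.locallyBoundedVariationOn hbv
  have hfc : Continuous f := hγc.comp continuous_projIcc
  have h0m : (0:ℝ) ∈ Icc (0:ℝ) 1 := by norm_num
  have h1m : (1:ℝ) ∈ Icc (0:ℝ) 1 := by norm_num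
  set v : ℝ → ℝ := variationOnFromTo f (Icc (0:ℝ) 1) 0 with hv_def
  set L : ℝ := l.toReal with hL_def
  have hL0 : 0 ≤ L := ENNReal.toReal_nonneg
  have hv0 : v 0 = 0 := variationOnFromTo.self f _ 0
  have hv1 : v 1 = L := by
    rw [hv_def, variationOnFromTo.eq_of_le f _ zero_le_one]
    congr 1
    rw [show Icc (0:ℝ) 1 ∩ Icc 0 1 = Icc (0:ℝ) 1 from inter_self _, hcomp]
  have hvmono : MonotoneOn v (Icc (0:ℝ) 1) := variationOnFromTo.monotoneOn hlbv h0m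
  have hvcont : ContinuousOn v (Icc (0:ℝ) 1) := continuousOn_vft hfc.continuousOn hbv
  have himage : v '' Icc (0:ℝ) 1 = Icc 0 L := by
    apply Subset.antisymm
    · rintro _ ⟨u, hu, rfl⟩
      exact ⟨hv0 ▸ hvmono h0m hu hu.1, hv1 ▸ hvmono hu h1m hu.2⟩
    · have := intermediate_value_Icc zero_le_one hvcont
      rw [hv0, hv1] at this
      exact this
  set φ : ℝ → E2 := naturalParameterization f (Icc (0:ℝ) 1) 0 with hφ_def
  have hus : HasUnitSpeedOn φ (Icc 0 L) := by
    rw [← himage]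
    exact has_unit_speed_naturalParameterization f hlbv h0m
  have hφv : ∀ b ∈ Icc (0:ℝ) 1, φ (v b) = f b := fun b hb =>
    edist_eq_zero.mp (edist_naturalParameterization_eq_zero hlbv h0m hb)
  have hlip1 : ∀ x ∈ Icc 0 L, ∀ y ∈ Icc 0 L, x ≤ y →
      edist (φ x) (φ y) ≤ ENNReal.ofReal (y - x) := by
    intro x hx y hy hxy
    have h1 := eVariationOn.edist_le φ
      (show x ∈ Icc 0 L ∩ Icc x y from ⟨hx, le_rfl, hxy⟩)
      (show y ∈ Icc 0 L ∩ Icc x y from ⟨hy, hxy, le_rfl⟩)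
    have h2 := hus hx hy
    rw [h2] at h1
    simpa using h1
  set σ : Set.Icc (0:ℝ) 1 → E2 := fun a => φ (L * a) with hσ_def
  have hmem : ∀ a : Set.Icc (0:ℝ) 1, L * a ∈ Icc 0 L := fun a =>
    ⟨mul_nonneg hL0 a.2.1, by nlinarith [a.2.2, a.2.1]⟩
  have hofL : ENNReal.ofReal L = l := by
    rw [hL_def, ENNReal.ofReal_toReal hlt]
  have key : ∀ a b : Set.Icc (0:ℝ) 1, (a:ℝ) ≤ (b:ℝ) →
      edist (σ a) (σ b) ≤ l.toNNReal * edist a b := by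
    intro a b hab
    have h1 := hlip1 _ (hmem a) _ (hmem b) (mul_le_mul_of_nonneg_left hab hL0)
    refine le_trans h1 ?_
    have he : edist a b = ENNReal.ofReal ((b:ℝ) - (a:ℝ)) := by
      rw [Subtype.edist_eq, edist_dist, Real.dist_eq, abs_of_nonpos (by linarith), neg_sub]
    rw [he, ENNReal.coe_toNNReal hlt,
      show L * (b:ℝ) - L * (a:ℝ) = L * ((b:ℝ) - (a:ℝ)) by ring,
      ENNReal.ofReal_mul hL0, hofL]
  refine ⟨σ, ?_, ?_, ?_, ?_, ?_⟩
  · intro a b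
    rcases le_total (a:ℝ) (b:ℝ) with hab | hab
    · exact key a b hab
    · rw [edist_comm, edist_comm a b]
      exact key b a hab
  · rintro _ ⟨a, rfl⟩
    have : L * (a:ℝ) ∈ v '' Icc (0:ℝ) 1 := himage ▸ hmem a
    obtain ⟨b, hb, hvb⟩ := this
    show φ (L * (a:ℝ)) ∈ P
    rw [← hvb, hφv b hb]
    exact hγP ⟨Set.projIcc 0 1 zero_le_one b, rfl⟩
  · show φ (L * (0:ℝ)) = γ ⟨0, by norm_num⟩
    have e1 : L * (0:ℝ) = v 0 := by rw [hv0]; ring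
    rw [e1, hφv 0 h0m]
    exact congrFun hfγ ⟨0, by norm_num⟩
  · show φ (L * (1:ℝ)) = γ ⟨1, by norm_num⟩
    have e2 : L * (1:ℝ) = v 1 := by rw [hv1]; ring
    rw [e2, hφv 1 h1m]
    exact congrFun hfγ ⟨1, by norm_num⟩
  · have hg : MonotoneOn (fun a : Set.Icc (0:ℝ) 1 => L * (a:ℝ)) univ := fun a _ b hb hab =>
      mul_le_mul_of_nonneg_left (Subtype.coe_le_coe.mpr hab) hL0
    have hcompσ : eVariationOn σ univ
        = eVariationOn φ ((fun a : Set.Icc (0:ℝ) 1 => L * (a:ℝ)) '' univ) := by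
      rw [← eVariationOn.comp_eq_of_monotoneOn φ _ hg]
      rfl
    rw [hcompσ]
    have hsub2 : (fun a : Set.Icc (0:ℝ) 1 => L * (a:ℝ)) '' univ ⊆ Icc 0 L := by
      rintro _ ⟨a, _, rfl⟩
      exact hmem a
    refine le_trans (eVariationOn.mono φ hsub2) ?_
    · have h2 := hus (show (0:ℝ) ∈ Icc 0 L from ⟨le_rfl, hL0⟩)
        (show L ∈ Icc 0 L from ⟨hL0, le_rfl⟩)
      rw [inter_self] at h2
      rw [h2]
      simp [hofL]

lemma isCompact_pathSet {P : Set E2} (hP : IsCompact P) (x0 : E2) (M : ℝ≥0) :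
    IsCompact {σ : C(Set.Icc (0:ℝ) 1, E2) |
      LipschitzWith M ⇑σ ∧ Set.range ⇑σ ⊆ P ∧ σ ⟨0, by norm_num⟩ = x0} := by
  set S := {σ : C(Set.Icc (0:ℝ) 1, E2) |
      LipschitzWith M ⇑σ ∧ Set.range ⇑σ ⊆ P ∧ σ ⟨0, by norm_num⟩ = x0} with hS_def
  apply ArzelaAscoli.isCompact_of_equicontinuous
  · -- compactness of the image in the product topology
    have himg : ContinuousMap.toFun '' S =
        {g : Set.Icc (0:ℝ) 1 → E2 | LipschitzWith M g ∧ (∀ a, g a ∈ P) ∧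
          g ⟨0, by norm_num⟩ = x0} := by
      apply Subset.antisymm
      · rintro _ ⟨σ, ⟨h1, h2, h3⟩, rfl⟩
        exact ⟨h1, fun a => h2 ⟨a, rfl⟩, h3⟩
      · rintro g ⟨h1, h2, h3⟩
        exact ⟨ContinuousMap.mk g h1.continuous, ⟨h1, range_subset_iff.mpr h2, h3⟩, rfl⟩
    rw [himg]
    have hclosed : IsClosed {g : Set.Icc (0:ℝ) 1 → E2 | LipschitzWith M g ∧ (∀ a, g a ∈ P) ∧
        g ⟨0, by norm_num⟩ = x0} := by
      have hset : {g : Set.Icc (0:ℝ) 1 → E2 | LipschitzWith M g ∧ (∀ a, g a ∈ P) ∧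
          g ⟨0, by norm_num⟩ = x0} =
          (⋂ (a) (b), {g : Set.Icc (0:ℝ) 1 → E2 | edist (g a) (g b) ≤ M * edist a b}) ∩
          ((⋂ a, {g : Set.Icc (0:ℝ) 1 → E2 | g a ∈ P}) ∩
            {g : Set.Icc (0:ℝ) 1 → E2 | g ⟨0, by norm_num⟩ = x0}) := by
        ext g
        simp only [mem_setOf_eq, mem_inter_iff, mem_iInter]
        exact and_congr_left' ⟨fun h a b => @h a b, fun h => fun x y => h x y⟩
      rw [hset]
      refine IsClosed.inter ?_ (IsClosed.inter ?_ ?_)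
      · refine isClosed_iInter fun a => isClosed_iInter fun b => ?_
        exact isClosed_le (Continuous.edist (continuous_apply a) (continuous_apply b))
          continuous_const
      · exact isClosed_iInter fun a => hP.isClosed.preimage (continuous_apply a)
      · exact isClosed_eq (continuous_apply _) continuous_const
    have hsub : {g : Set.Icc (0:ℝ) 1 → E2 | LipschitzWith M g ∧ (∀ a, g a ∈ P) ∧
        g ⟨0, by norm_num⟩ = x0} ⊆ Set.univ.pi (fun _ => P) := by
      rintro g ⟨_, h2, _⟩ a _
      exact h2 a
    exact IsCompact.of_isClosed_subset (isCompact_univ_pi fun _ => hP) hclosed hsub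
  · -- equicontinuity
    apply Metric.equicontinuous_of_continuity_modulus (fun d => (M:ℝ) * d)
    · have : Continuous fun d : ℝ => (M:ℝ) * d := continuous_const.mul continuous_id
      simpa using this.tendsto 0
    · rintro x y ⟨σ, hσ⟩
      exact hσ.1.dist_le_mul x y

lemma lsc_evar :
    LowerSemicontinuous (fun γ : C(Set.Icc (0:ℝ) 1, E2) => eVariationOn ⇑γ Set.univ) := by
  have : (fun γ : C(Set.Icc (0:ℝ) 1, E2) => eVariationOn ⇑γ Set.univ) =
      fun γ : C(Set.Icc (0:ℝ) 1, E2) =>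
        ⨆ p : ℕ × { u : ℕ → Set.Icc (0:ℝ) 1 // Monotone u ∧ ∀ i, u i ∈ (Set.univ : Set _) },
          ∑ i ∈ Finset.range p.1, edist (γ (p.2.1 (i + 1))) (γ (p.2.1 i)) := rfl
  rw [this]
  refine lowerSemicontinuous_iSup fun p => Continuous.lowerSemicontinuous ?_
  refine continuous_finset_sum _ fun i _ => Continuous.edist ?_ ?_
  · exact continuous_eval_const _
  · exact continuous_eval_const _

lemma lsc_exists_min {X : Type*} [TopologicalSpace X] {K : Set X} (hK : IsCompact K)
    (hne : K.Nonempty) {F : X → ℝ≥0∞} (hF : LowerSemicontinuous F) :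
    ∃ x ∈ K, ∀ y ∈ K, F x ≤ F y := by
  by_contra h
  push_neg at h
  set m : ℝ≥0∞ := ⨅ y ∈ K, F y with hm_def
  have hmlt : ∀ x ∈ K, m < F x := by
    intro x hx
    obtain ⟨y, hy, hlt⟩ := h x hx
    exact lt_of_le_of_lt (iInf₂_le y hy) hlt
  have hchoice : ∀ x : X, ∃ c : ℝ≥0∞, x ∈ K → (m < c ∧ c < F x) := by
    intro x
    by_cases hx : x ∈ K
    · obtain ⟨c, hc1, hc2⟩ := exists_between (hmlt x hx)
      exact ⟨c, fun _ => ⟨hc1, hc2⟩⟩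
    · exact ⟨0, fun h' => absurd h' hx⟩
  choose c hc using hchoice
  have hopen : ∀ x : X, IsOpen {y : X | c x < F y} := fun x =>
    hF.isOpen_preimage (c x)
  have hcover : K ⊆ ⋃ x ∈ K, {y : X | c x < F y} := by
    intro y hy
    exact Set.mem_biUnion hy ((hc y) hy).2
  obtain ⟨T, hTsub, hTfin, hTcover⟩ := hK.elim_finite_subcover_image (fun x _ => hopen x) hcover
  obtain ⟨y0, hy0⟩ := hne
  have hy0' := hTcover hy0
  rw [Set.mem_iUnion₂] at hy0'
  obtain ⟨x0, hx0T, _⟩ := hy0'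
  obtain ⟨xm, hxmT, hxmmin⟩ := Set.exists_min_image T c hTfin ⟨x0, hx0T⟩
  have h1 : m < c xm := ((hc xm) (hTsub hxmT)).1
  have h2 : c xm ≤ m := by
    refine le_iInf₂ fun y hy => ?_
    have := hTcover hy
    rw [Set.mem_iUnion₂] at this
    obtain ⟨x, hxT, hxy⟩ := this
    exact le_trans (hxmmin x hxT) (le_of_lt hxy)
  exact absurd (lt_of_lt_of_le h1 h2) (lt_irrefl m)

lemma lsc_comp_cont {X Y : Type*} [TopologicalSpace X] [TopologicalSpace Y] {H : Y → ℝ≥0∞}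
    (hH : LowerSemicontinuous H) {g : X → Y} (hg : Continuous g) :
    LowerSemicontinuous (fun x => H (g x)) := by
  rw [lowerSemicontinuous_iff_isOpen_preimage] at hH ⊢
  intro y
  exact (hH y).preimage hg

lemma lsc_max {X : Type*} [TopologicalSpace X] {F G : X → ℝ≥0∞}
    (hF : LowerSemicontinuous F) (hG : LowerSemicontinuous G) :
    LowerSemicontinuous (fun x => max (F x) (G x)) := by
  have h := lowerSemicontinuous_iSup (f := fun b : Bool => bif b then F else G)
    (fun b => by cases b <;> simpa)
  have he : (fun x => ⨆ b : Bool, (bif b then F else G) x) =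
      fun x => max (F x) (G x) := by
    funext x
    rw [iSup_bool_eq]
    simp only [cond_true, cond_false]
  rwa [he] at h

/-- Existence of a min-max optimal pair for the quickest pair-visibility problem
in a compact planar set. -/
theorem minmax_optimal_pair_exists (P : Set E2) (hP : IsCompact P)
    (s t : E2) (hs : s ∈ P) (ht : t ∈ P) :
    ∃ s' t' : E2, s' ∈ P ∧ t' ∈ P ∧ segment ℝ s' t' ⊆ P ∧
      ∀ p q : E2, p ∈ P → q ∈ P → segment ℝ p q ⊆ P →
        max (geoDist P s s') (geoDist P t t') ≤ max (geoDist P s p) (geoDist P t q) := by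
  classical
  set m : ℝ≥0∞ := ⨅ (p : E2) (q : E2) (_ : p ∈ P) (_ : q ∈ P) (_ : segment ℝ p q ⊆ P),
    max (geoDist P s p) (geoDist P t q) with hm_def
  have hmle : ∀ p q : E2, p ∈ P → q ∈ P → segment ℝ p q ⊆ P →
      m ≤ max (geoDist P s p) (geoDist P t q) := by
    intro p q hp hq hseg
    refine le_trans (iInf_le _ p) (le_trans (iInf_le _ q) (le_trans (iInf_le _ hp)
      (le_trans (iInf_le _ hq) (iInf_le _ hseg))))
  by_cases hm : m = ⊤
  · refine ⟨s, s, hs, hs, by rw [segment_same]; simpa using hs, ?_⟩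
    intro p q hp hq hseg
    have htop : max (geoDist P s p) (geoDist P t q) = ⊤ :=
      top_le_iff.mp (hm ▸ hmle p q hp hq hseg)
    rw [htop]
    exact le_top
  have hm1 : m + 1 ≠ ⊤ := ENNReal.add_ne_top.mpr ⟨hm, ENNReal.one_ne_top⟩
  set M : ℝ≥0 := (m + 1).toNNReal with hM_def
  have hM : (M : ℝ≥0∞) = m + 1 := ENNReal.coe_toNNReal hm1
  set p0 : Set.Icc (0:ℝ) 1 := ⟨0, by norm_num⟩ with hp0_def
  set p1 : Set.Icc (0:ℝ) 1 := ⟨1, by norm_num⟩ with hp1_def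
  set S1 := {σ : C(Set.Icc (0:ℝ) 1, E2) |
    LipschitzWith M ⇑σ ∧ Set.range ⇑σ ⊆ P ∧ σ ⟨0, by norm_num⟩ = s} with hS1_def
  set S2 := {σ : C(Set.Icc (0:ℝ) 1, E2) |
    LipschitzWith M ⇑σ ∧ Set.range ⇑σ ⊆ P ∧ σ ⟨0, by norm_num⟩ = t} with hS2_def
  set SEG := {z : C(Set.Icc (0:ℝ) 1, E2) × C(Set.Icc (0:ℝ) 1, E2) |
    segment ℝ (z.1 p1) (z.2 p1) ⊆ P} with hSEG_def
  have hSEGclosed : IsClosed SEG := by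
    have hrw : SEG = ⋂ θ ∈ Icc (0:ℝ) 1,
        {z : C(Set.Icc (0:ℝ) 1, E2) × C(Set.Icc (0:ℝ) 1, E2) |
          (1-θ) • (z.1 p1) + θ • (z.2 p1) ∈ P} := by
      ext z
      simp only [hSEG_def, mem_setOf_eq, mem_iInter]
      rw [segment_eq_image ℝ, image_subset_iff]
      exact Iff.rfl
    rw [hrw]
    refine isClosed_biInter fun θ hθ => ?_
    have hcont : Continuous fun z : C(Set.Icc (0:ℝ) 1, E2) × C(Set.Icc (0:ℝ) 1, E2) =>
        (1-θ) • (z.1 p1) + θ • (z.2 p1) :=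
      by have h := (((continuous_eval_const p1 : Continuous fun f : C(Set.Icc (0:ℝ) 1, E2) => f p1).comp
            continuous_fst).const_smul (1-θ)).add
          (((continuous_eval_const p1 : Continuous fun f : C(Set.Icc (0:ℝ) 1, E2) => f p1).comp
            continuous_snd).const_smul θ); exact h
    exact hP.isClosed.preimage hcont
  set K := (S1 ×ˢ S2) ∩ SEG with hK_def
  have hK : IsCompact K :=
    ((isCompact_pathSet hP s M).prod (isCompact_pathSet hP t M)).inter_right hSEGclosed
  have key : ∀ ε : ℝ≥0∞, 0 < ε → ε ≤ 1 → ∃ z ∈ K,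
      max (eVariationOn (⇑z.1) Set.univ) (eVariationOn (⇑z.2) Set.univ) ≤ m + ε := by
    intro ε hε0 hε1
    have hlt : m < m + ε := ENNReal.lt_add_right hm hε0.ne'
    nth_rewrite 1 [hm_def] at hlt
    rw [iInf_lt_iff] at hlt; obtain ⟨p, hlt⟩ := hlt
    rw [iInf_lt_iff] at hlt; obtain ⟨q, hlt⟩ := hlt
    rw [iInf_lt_iff] at hlt; obtain ⟨hp, hlt⟩ := hlt
    rw [iInf_lt_iff] at hlt; obtain ⟨hq, hlt⟩ := hlt
    rw [iInf_lt_iff] at hlt; obtain ⟨hseg, hlt⟩ := hlt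
    have h1 : geoDist P s p < m + ε := lt_of_le_of_lt (le_max_left _ _) hlt
    have h2 : geoDist P t q < m + ε := lt_of_le_of_lt (le_max_right _ _) hlt
    unfold geoDist at h1 h2
    obtain ⟨l1, ⟨γ1, hc1, hP1, h01, h11, hv1⟩, hl1⟩ := sInf_lt_iff.mp h1
    obtain ⟨l2, ⟨γ2, hc2, hP2, h02, h12, hv2⟩, hl2⟩ := sInf_lt_iff.mp h2
    have hl1top : l1 ≠ ⊤ := hl1.ne_top
    have hl2top : l2 ≠ ⊤ := hl2.ne_top
    have hcoe : ∀ l : ℝ≥0∞, l < m + ε → l.toNNReal ≤ M := by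
      intro l hl
      have hle : l ≤ (M : ℝ≥0∞) := by
        rw [hM]
        exact le_trans hl.le (add_le_add_right hε1 m)
      have := (ENNReal.toNNReal_le_toNNReal hl.ne_top ENNReal.coe_ne_top).mpr hle
      simpa using this
    obtain ⟨σ1, hlip1, hrange1, hσ01, hσ11, hvar1⟩ := exists_lipschitz_path γ1 hc1 hP1 hv1 hl1top
    obtain ⟨σ2, hlip2, hrange2, hσ02, hσ12, hvar2⟩ := exists_lipschitz_path γ2 hc2 hP2 hv2 hl2top
    have hlipM1 : LipschitzWith M σ1 := hlip1.weaken (hcoe l1 hl1)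
    have hlipM2 : LipschitzWith M σ2 := hlip2.weaken (hcoe l2 hl2)
    refine ⟨(ContinuousMap.mk σ1 hlipM1.continuous, ContinuousMap.mk σ2 hlipM2.continuous),
      ⟨⟨⟨hlipM1, hrange1, hσ01.trans h01⟩, ⟨hlipM2, hrange2, hσ02.trans h02⟩⟩, ?_⟩, ?_⟩
    · show segment ℝ (σ1 p1) (σ2 p1) ⊆ P
      rw [show σ1 p1 = p from hσ11.trans h11, show σ2 p1 = q from hσ12.trans h12]
      exact hseg
    · exact max_le (le_trans hvar1 (le_of_lt hl1)) (le_trans hvar2 (le_of_lt hl2))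
  -- lower semicontinuity of the length functional
  have hG : LowerSemicontinuous (fun z : C(Set.Icc (0:ℝ) 1, E2) × C(Set.Icc (0:ℝ) 1, E2) =>
      max (eVariationOn (⇑z.1) Set.univ) (eVariationOn (⇑z.2) Set.univ)) := by
    refine lsc_max ?_ ?_
    · exact lsc_comp_cont lsc_evar continuous_fst
    · exact lsc_comp_cont lsc_evar continuous_snd
  obtain ⟨z1, hz1K, _⟩ := key 1 one_pos le_rfl
  obtain ⟨zs, hzsK, hzsmin⟩ := lsc_exists_min hK ⟨z1, hz1K⟩ hG
  have hGzs : max (eVariationOn (⇑zs.1) Set.univ) (eVariationOn (⇑zs.2) Set.univ) ≤ m := by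
    apply ENNReal.le_of_forall_pos_le_add
    intro ε hε hmtop
    set ε' : ℝ≥0∞ := min (ε : ℝ≥0∞) 1 with hε'_def
    have hε'0 : 0 < ε' := lt_min (ENNReal.coe_pos.mpr hε) one_pos
    obtain ⟨z, hzK', hGz⟩ := key ε' hε'0 (min_le_right _ _)
    exact le_trans (hzsmin z hzK') (le_trans hGz (add_le_add_right (min_le_left _ _) m))
  refine ⟨zs.1 p1, zs.2 p1, ?_, ?_, hzsK.2, ?_⟩
  · exact hzsK.1.1.2.1 ⟨p1, rfl⟩
  · exact hzsK.1.2.2.1 ⟨p1, rfl⟩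
  intro p q hp hq hseg
  have hg1 : geoDist P s (zs.1 p1) ≤ eVariationOn (⇑zs.1) Set.univ := by
    unfold geoDist
    exact sInf_le ⟨⇑zs.1, zs.1.continuous, hzsK.1.1.2.1, hzsK.1.1.2.2, rfl, rfl⟩
  have hg2 : geoDist P t (zs.2 p1) ≤ eVariationOn (⇑zs.2) Set.univ := by
    unfold geoDist
    exact sInf_le ⟨⇑zs.2, zs.2.continuous, hzsK.1.2.2.1, hzsK.1.2.2.2, rfl, rfl⟩
  exact le_trans (max_le_max hg1 hg2) (le_trans hGzs (hmle p q hp hq hseg))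
end

section
/- Let P be a compact subset of the Euclidean plane, and let s, t ∈ P. Then there exists an optimal pair for the min-sum quickest pair-visibility problem: a pair (s*, t*) of points of P with segment ℝ s* t* ⊆ P such that for every pair (p, q) of points of P with segment ℝ p q ⊆ P one has d_P(s, s*) + d_P(t, t*) ≤ d_P(s, p) + d_P(t, q) (addition in ℝ≥0∞). -/
open scoped ENNReal
open Set Filter Topology

lemma evar_right_small {g : ℝ → E2} {a b x : ℝ} (hx : x ∈ Set.Icc a b) (hxb : x < b)
    (hg : ContinuousWithinAt g (Set.Icc a b) x)
    (hfin : eVariationOn g (Set.Icc a b) ≠ ⊤)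
    {e : ℝ≥0∞} (he : 0 < e) (hetop : e ≠ ⊤) :
    ∃ t ∈ Set.Icc a b, x < t ∧ eVariationOn g (Set.Icc a b ∩ Set.Icc x t) ≤ e := by
  by_contra hcon
  push_neg at hcon
  have hc : ∀ t ∈ Set.Icc a b, x < t → e ≤ eVariationOn g (Set.Icc a b ∩ Set.Icc x t) :=
    fun t ht hxt => (hcon t ht hxt).le
  -- continuity: find δ
  have hball : g ⁻¹' EMetric.ball (g x) (e/2) ∈ 𝓝[Set.Icc a b] x :=
    hg (EMetric.ball_mem_nhds (g x) (ENNReal.half_pos he.ne'))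
  obtain ⟨δ, hδ, hsub⟩ := Metric.mem_nhdsWithin_iff.1 hball
  set t₀ : ℝ := min (x + δ/2) b with ht₀
  have hxt₀ : x < t₀ := lt_min (by linarith) hxb
  have ht₀s : t₀ ∈ Set.Icc a b := ⟨le_trans hx.1 hxt₀.le, min_le_right _ _⟩
  set S : Set ℝ := Set.Icc a b ∩ Set.Icc x t₀ with hS
  have hzone : ∀ w ∈ S, edist (g w) (g x) < e/2 := by
    rintro w ⟨hws, hwx, hwt⟩
    have : w ∈ Metric.ball x δ := by
      rw [Metric.mem_ball, Real.dist_eq, abs_of_nonneg (by linarith)]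
      have : t₀ ≤ x + δ/2 := min_le_left _ _
      linarith
    exact hsub ⟨this, hws⟩
  set V : ℝ≥0∞ := eVariationOn g S with hV
  have hVfin : V ≠ ⊤ :=
    ((eVariationOn.mono g Set.inter_subset_left).trans_lt hfin.lt_top).ne
  have heV : e ≤ V := hc t₀ ht₀s hxt₀
  -- key partition estimate
  have key : ∀ (n : ℕ) (u : ℕ → ℝ), Monotone u → (∀ i, u i ∈ S) →
      e + ∑ i ∈ Finset.range n, edist (g (u (i+1))) (g (u i)) ≤ e/2 + V := by
    intro n u hu hus
    classical
    by_cases hex : ∃ i, x < u i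
    · set k := Nat.find hex with hk
      have hks : x < u k := Nat.find_spec hex
      have hlt : ∀ i < k, u i = x := fun i hi =>
        le_antisymm (not_lt.1 (Nat.find_min hex hi)) (hus i).2.1
      by_cases hkn : k ≤ n
      · have hsplit : ∑ i ∈ Finset.range n, edist (g (u (i+1))) (g (u i)) =
            ∑ i ∈ Finset.range k, edist (g (u (i+1))) (g (u i)) +
            ∑ i ∈ Finset.Ico k n, edist (g (u (i+1))) (g (u i)) :=
          (Finset.sum_range_add_sum_Ico _ hkn).symm
        have hhead : ∑ i ∈ Finset.range k, edist (g (u (i+1))) (g (u i)) ≤ e/2 := by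
          rcases Nat.eq_zero_or_pos k with hk0 | hk0
          · simp [hk0]
          · rw [Finset.sum_eq_single_of_mem (k-1) (Finset.mem_range.2 (by omega))
              (fun i hi hne => by
                have hi' := Finset.mem_range.1 hi
                rw [hlt i (by omega), hlt (i+1) (by omega), edist_self])]
            have h1 : k - 1 + 1 = k := by omega
            rw [h1, hlt (k-1) (by omega)]
            exact (hzone (u k) (hus k)).le
        have htail : ∑ i ∈ Finset.Ico k n, edist (g (u (i+1))) (g (u i)) ≤
            eVariationOn g (Set.Icc a b ∩ Set.Icc (u k) t₀) := by
          rw [Finset.sum_Ico_eq_sum_range]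
          have := eVariationOn.sum_le (f := g) (s := Set.Icc a b ∩ Set.Icc (u k) t₀)
            (n := n - k) (u := fun j => u (k + j))
            (fun i j hij => hu (by omega))
            (fun j => ⟨(hus (k+j)).1, hu (Nat.le_add_right k j), (hus (k+j)).2.2⟩)
          refine le_trans (le_of_eq (Finset.sum_congr rfl fun i _ => ?_)) this
          have h2 : k + i + 1 = k + (i + 1) := by omega
          rw [h2]
        calc e + (∑ i ∈ Finset.range n, edist (g (u (i+1))) (g (u i)))
            = ∑ i ∈ Finset.range k, edist (g (u (i+1))) (g (u i)) +
              (e + ∑ i ∈ Finset.Ico k n, edist (g (u (i+1))) (g (u i))) := by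
              rw [hsplit]; ring
          _ ≤ e/2 + (eVariationOn g (Set.Icc a b ∩ Set.Icc x (u k)) +
              eVariationOn g (Set.Icc a b ∩ Set.Icc (u k) t₀)) :=
              add_le_add hhead (add_le_add (hc (u k) (hus k).1 hks) htail)
          _ = e/2 + V := by
              rw [eVariationOn.Icc_add_Icc g (hus k).2.1 (hus k).2.2 (hus k).1]
      · have hzero : ∑ i ∈ Finset.range n, edist (g (u (i+1))) (g (u i)) = 0 :=
          Finset.sum_eq_zero fun i hi => by
            have hi' := Finset.mem_range.1 hi
            rw [hlt i (by omega), hlt (i+1) (by omega), edist_self]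
        rw [hzero, add_zero]
        exact heV.trans le_add_self
    · push_neg at hex
      have hzero : ∑ i ∈ Finset.range n, edist (g (u (i+1))) (g (u i)) = 0 :=
        Finset.sum_eq_zero fun i hi => by
          rw [le_antisymm (hex i) (hus i).2.1, le_antisymm (hex (i+1)) (hus (i+1)).2.1,
            edist_self]
      rw [hzero, add_zero]
      exact heV.trans le_add_self
  -- conclude
  haveI : Nonempty { u : ℕ → ℝ // Monotone u ∧ ∀ i, u i ∈ S } :=
    eVariationOn.nonempty_monotone_mem ⟨x, hx, le_refl x, hxt₀.le⟩
  have hsum : e + V ≤ e/2 + V := by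
    have hunfold : e + V = ⨆ p : ℕ × { u : ℕ → ℝ // Monotone u ∧ ∀ i, u i ∈ S },
        (e + ∑ i ∈ Finset.range p.1, edist (g ((p.2 : ℕ → ℝ) (i+1))) (g ((p.2 : ℕ → ℝ) i))) := by
      rw [hV, eVariationOn, ENNReal.add_iSup]
    rw [hunfold]
    exact iSup_le fun p => key p.1 p.2 p.2.2.1 p.2.2.2
  have : e ≤ e/2 := (ENNReal.add_le_add_iff_right hVfin).1 hsum
  exact absurd this (not_le.2 (ENNReal.half_lt_self he.ne' hetop))

lemma evar_left_small {g : ℝ → E2} {a b x : ℝ} (hx : x ∈ Set.Icc a b) (hax : a < x)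
    (hg : ContinuousWithinAt g (Set.Icc a b) x)
    (hfin : eVariationOn g (Set.Icc a b) ≠ ⊤)
    {e : ℝ≥0∞} (he : 0 < e) (hetop : e ≠ ⊤) :
    ∃ t ∈ Set.Icc a b, t < x ∧ eVariationOn g (Set.Icc a b ∩ Set.Icc t x) ≤ e := by
  by_contra hcon
  push_neg at hcon
  have hc : ∀ t ∈ Set.Icc a b, t < x → e ≤ eVariationOn g (Set.Icc a b ∩ Set.Icc t x) :=
    fun t ht hxt => (hcon t ht hxt).le
  have hball : g ⁻¹' EMetric.ball (g x) (e/2) ∈ 𝓝[Set.Icc a b] x :=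
    hg (EMetric.ball_mem_nhds (g x) (ENNReal.half_pos he.ne'))
  obtain ⟨δ, hδ, hsub⟩ := Metric.mem_nhdsWithin_iff.1 hball
  set t₀ : ℝ := max (x - δ/2) a with ht₀
  have ht₀x : t₀ < x := max_lt (by linarith) hax
  have ht₀s : t₀ ∈ Set.Icc a b := ⟨le_max_right _ _, le_trans ht₀x.le hx.2⟩
  set S : Set ℝ := Set.Icc a b ∩ Set.Icc t₀ x with hS
  have hzone : ∀ w ∈ S, edist (g w) (g x) < e/2 := by
    rintro w ⟨hws, hwt, hwx⟩
    have : w ∈ Metric.ball x δ := by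
      rw [Metric.mem_ball, Real.dist_eq, abs_of_nonpos (by linarith)]
      have : x - δ/2 ≤ t₀ := le_max_left _ _
      linarith
    exact hsub ⟨this, hws⟩
  set V : ℝ≥0∞ := eVariationOn g S with hV
  have hVfin : V ≠ ⊤ :=
    ((eVariationOn.mono g Set.inter_subset_left).trans_lt hfin.lt_top).ne
  have heV : e ≤ V := hc t₀ ht₀s ht₀x
  have key : ∀ (n : ℕ) (u : ℕ → ℝ), Monotone u → (∀ i, u i ∈ S) →
      e + ∑ i ∈ Finset.range n, edist (g (u (i+1))) (g (u i)) ≤ e/2 + V := by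
    intro n u hu hus
    classical
    -- helper for the case where all relevant points are < x
    have hall : (∀ i ≤ n, u i < x) →
        e + ∑ i ∈ Finset.range n, edist (g (u (i+1))) (g (u i)) ≤ e/2 + V := by
      intro hlt
      have hbound : ∑ i ∈ Finset.range n, edist (g (u (i+1))) (g (u i)) ≤
          eVariationOn g (Set.Icc a b ∩ Set.Icc t₀ (u n)) := by
        have := eVariationOn.sum_le (f := g) (s := Set.Icc a b ∩ Set.Icc t₀ (u n))
          (n := n) (u := fun i => u (min i n))
          (fun i j hij => hu (by omega))
          (fun i => ⟨(hus _).1, (hus _).2.1, hu (min_le_right i n)⟩)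
        refine le_trans (le_of_eq (Finset.sum_congr rfl fun i hi => ?_)) this
        have hi' := Finset.mem_range.1 hi
        have h1 : min i n = i := by omega
        have h2 : min (i+1) n = i + 1 := by omega
        simp only [h1, h2]
      calc e + ∑ i ∈ Finset.range n, edist (g (u (i+1))) (g (u i))
          ≤ eVariationOn g (Set.Icc a b ∩ Set.Icc t₀ (u n)) +
            eVariationOn g (Set.Icc a b ∩ Set.Icc (u n) x) := by
            rw [add_comm]
            exact add_le_add hbound (hc (u n) (hus n).1 (hlt n le_rfl))
        _ = V := eVariationOn.Icc_add_Icc g (hus n).2.1 (hlt n le_rfl).le (hus n).1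
        _ ≤ e/2 + V := le_add_self
    by_cases hex : ∃ i, x ≤ u i
    · set k := Nat.find hex with hk
      have hks : u k = x := le_antisymm (hus k).2.2 (Nat.find_spec hex)
      have hlt : ∀ i < k, u i < x := fun i hi => not_le.1 (Nat.find_min hex hi)
      have heq : ∀ i, k ≤ i → u i = x := fun i hi =>
        le_antisymm (hus i).2.2 (hks ▸ hu hi)
      rcases Nat.eq_zero_or_pos k with hk0 | hk0
      · have hzero : ∑ i ∈ Finset.range n, edist (g (u (i+1))) (g (u i)) = 0 :=
          Finset.sum_eq_zero fun i _ => by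
            rw [heq i (by omega), heq (i+1) (by omega), edist_self]
        rw [hzero, add_zero]
        exact heV.trans le_add_self
      · by_cases hkn : k ≤ n
        · have hsplit : ∑ i ∈ Finset.range n, edist (g (u (i+1))) (g (u i)) =
              ∑ i ∈ Finset.range k, edist (g (u (i+1))) (g (u i)) +
              ∑ i ∈ Finset.Ico k n, edist (g (u (i+1))) (g (u i)) :=
            (Finset.sum_range_add_sum_Ico _ hkn).symm
          have htailzero : ∑ i ∈ Finset.Ico k n, edist (g (u (i+1))) (g (u i)) = 0 :=
            Finset.sum_eq_zero fun i hi => by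
              have hi' := (Finset.mem_Ico.1 hi).1
              rw [heq i (by omega), heq (i+1) (by omega), edist_self]
          have hheadsplit : ∑ i ∈ Finset.range k, edist (g (u (i+1))) (g (u i)) =
              ∑ i ∈ Finset.range (k-1), edist (g (u (i+1))) (g (u i)) +
              edist (g (u (k-1+1))) (g (u (k-1))) := by
            conv_lhs => rw [show k = (k-1) + 1 by omega, Finset.sum_range_succ]
          have hterm : edist (g (u (k-1+1))) (g (u (k-1))) ≤ e/2 := by
            have h1 : k - 1 + 1 = k := by omega
            rw [h1, hks, edist_comm]
            exact (hzone (u (k-1)) (hus (k-1))).le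
          have hheadbound : ∑ i ∈ Finset.range (k-1), edist (g (u (i+1))) (g (u i)) ≤
              eVariationOn g (Set.Icc a b ∩ Set.Icc t₀ (u (k-1))) := by
            have := eVariationOn.sum_le (f := g) (s := Set.Icc a b ∩ Set.Icc t₀ (u (k-1)))
              (n := k-1) (u := fun i => u (min i (k-1)))
              (fun i j hij => hu (by omega))
              (fun i => ⟨(hus _).1, (hus _).2.1, hu (min_le_right i (k-1))⟩)
            refine le_trans (le_of_eq (Finset.sum_congr rfl fun i hi => ?_)) this
            have hi' := Finset.mem_range.1 hi
            have h1 : min i (k-1) = i := by omega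
            have h2 : min (i+1) (k-1) = i + 1 := by omega
            simp only [h1, h2]
          calc e + ∑ i ∈ Finset.range n, edist (g (u (i+1))) (g (u i))
              = edist (g (u (k-1+1))) (g (u (k-1))) +
                (∑ i ∈ Finset.range (k-1), edist (g (u (i+1))) (g (u i)) + e) := by
                rw [hsplit, htailzero, hheadsplit]; ring
            _ ≤ e/2 + (eVariationOn g (Set.Icc a b ∩ Set.Icc t₀ (u (k-1))) +
                eVariationOn g (Set.Icc a b ∩ Set.Icc (u (k-1)) x)) :=
                add_le_add hterm
                  (add_le_add hheadbound (hc (u (k-1)) (hus (k-1)).1 (hlt (k-1) (by omega))))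
            _ = e/2 + V := by
                rw [eVariationOn.Icc_add_Icc g (hus (k-1)).2.1 (hlt (k-1) (by omega)).le
                  (hus (k-1)).1]
        · exact hall fun i hi => hlt i (by omega)
    · push_neg at hex
      exact hall fun i _ => hex i
  haveI : Nonempty { u : ℕ → ℝ // Monotone u ∧ ∀ i, u i ∈ S } :=
    eVariationOn.nonempty_monotone_mem ⟨x, hx, ht₀x.le, le_refl x⟩
  have hsum : e + V ≤ e/2 + V := by
    have hunfold : e + V = ⨆ p : ℕ × { u : ℕ → ℝ // Monotone u ∧ ∀ i, u i ∈ S },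
        (e + ∑ i ∈ Finset.range p.1, edist (g ((p.2 : ℕ → ℝ) (i+1))) (g ((p.2 : ℕ → ℝ) i))) := by
      rw [hV, eVariationOn, ENNReal.add_iSup]
    rw [hunfold]
    exact iSup_le fun p => key p.1 p.2 p.2.2.1 p.2.2.2
  have : e ≤ e/2 := (ENNReal.add_le_add_iff_right hVfin).1 hsum
  exact absurd this (not_le.2 (ENNReal.half_lt_self he.ne' hetop))

lemma reparam {γ : Set.Icc (0:ℝ) 1 → E2} (hγ : Continuous γ)
    (hfin : eVariationOn γ Set.univ ≠ ⊤) :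
    ∃ σ : Set.Icc (0:ℝ) 1 → E2,
      LipschitzWith (eVariationOn γ Set.univ).toNNReal σ ∧
      Set.range σ ⊆ Set.range γ ∧
      σ ⟨0, by norm_num⟩ = γ ⟨0, by norm_num⟩ ∧
      σ ⟨1, by norm_num⟩ = γ ⟨1, by norm_num⟩ ∧
      eVariationOn σ Set.univ ≤ eVariationOn γ Set.univ := by
  set g : ℝ → E2 := γ ∘ Set.projIcc 0 1 zero_le_one with hg
  have himg : Set.projIcc 0 1 zero_le_one '' Set.Icc 0 1 = (Set.univ : Set (Set.Icc (0:ℝ) 1)) := by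
    apply Set.eq_univ_of_forall
    rintro ⟨t, ht⟩
    exact ⟨t, ht, Set.projIcc_of_mem _ ht⟩
  have hcomp : eVariationOn g (Set.Icc 0 1) = eVariationOn γ Set.univ := by
    rw [hg, eVariationOn.comp_eq_of_monotoneOn γ _ ((monotone_projIcc zero_le_one).monotoneOn _), himg]
  have hfin' : eVariationOn g (Set.Icc 0 1) ≠ ⊤ := by rw [hcomp]; exact hfin
  have hbv : BoundedVariationOn g (Set.Icc 0 1) := hfin'
  have lbv : LocallyBoundedVariationOn g (Set.Icc 0 1) := hbv.locallyBoundedVariationOn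
  have hgc : ∀ y : ℝ, ContinuousWithinAt g (Set.Icc 0 1) y := fun y =>
    ((hγ.comp continuous_projIcc).continuousAt).continuousWithinAt
  set ℓ : ℝ≥0∞ := eVariationOn γ Set.univ with hℓ
  set L : ℝ := ℓ.toReal with hL
  have hL0 : 0 ≤ L := ENNReal.toReal_nonneg
  have h0m : (0:ℝ) ∈ Set.Icc (0:ℝ) 1 := by norm_num
  have h1m : (1:ℝ) ∈ Set.Icc (0:ℝ) 1 := by norm_num
  set v : ℝ → ℝ := fun t => variationOnFromTo g (Set.Icc 0 1) 0 t with hv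
  have hv0 : v 0 = 0 := variationOnFromTo.self g _ 0
  have hvdiff : ∀ {p q : ℝ}, p ∈ Set.Icc (0:ℝ) 1 → q ∈ Set.Icc (0:ℝ) 1 → p ≤ q →
      v q - v p = (eVariationOn g (Set.Icc 0 1 ∩ Set.Icc p q)).toReal := by
    intro p q hp hq hpq
    have hadd := variationOnFromTo.add lbv h0m hp hq
    have := variationOnFromTo.eq_of_le g (Set.Icc (0:ℝ) 1) hpq
    show variationOnFromTo g (Set.Icc 0 1) 0 q - variationOnFromTo g (Set.Icc 0 1) 0 p
      = (eVariationOn g (Set.Icc 0 1 ∩ Set.Icc p q)).toReal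
    rw [← hadd, this]; ring
  have hv1 : v 1 = L := by
    have := hvdiff h0m h1m zero_le_one
    rw [hv0, sub_zero] at this
    rw [this, show Set.Icc (0:ℝ) 1 ∩ Set.Icc 0 1 = Set.Icc 0 1 from Set.inter_self _, hcomp]
  have hvmono : MonotoneOn v (Set.Icc 0 1) := variationOnFromTo.monotoneOn lbv h0m
  -- the sets A u and their infima
  set A : ℝ → Set ℝ := fun u => {t ∈ Set.Icc (0:ℝ) 1 | L * u ≤ v t} with hA
  have hAsub : ∀ u, A u ⊆ Set.Icc 0 1 := fun u t ht => ht.1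
  have hAbdd : ∀ u, BddBelow (A u) := fun u => ⟨0, fun t ht => ht.1.1⟩
  have hAne : ∀ u ∈ Set.Icc (0:ℝ) 1, (1:ℝ) ∈ A u := by
    intro u hu
    refine ⟨h1m, ?_⟩
    rw [hv1]
    calc L * u ≤ L * 1 := mul_le_mul_of_nonneg_left hu.2 hL0
      _ = L := mul_one L
  set ψ : ℝ → ℝ := fun u => sInf (A u) with hψ
  have hψmem : ∀ u ∈ Set.Icc (0:ℝ) 1, ψ u ∈ Set.Icc (0:ℝ) 1 := by
    intro u hu
    constructor
    · exact le_csInf ⟨1, hAne u hu⟩ fun t ht => ht.1.1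
    · exact csInf_le (hAbdd u) (hAne u hu)
  have hψmono : ∀ u ∈ Set.Icc (0:ℝ) 1, ∀ u' ∈ Set.Icc (0:ℝ) 1, u ≤ u' → ψ u ≤ ψ u' := by
    intro u hu u' hu' huu
    refine csInf_le_csInf (hAbdd u) ⟨1, hAne u' hu'⟩ fun t ht => ?_
    exact ⟨ht.1, le_trans (mul_le_mul_of_nonneg_left huu hL0) ht.2⟩
  -- key identity : v (ψ u) = L * u
  have hkey : ∀ u ∈ Set.Icc (0:ℝ) 1, v (ψ u) = L * u := by
    intro u hu
    have hψm := hψmem u hu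
    apply le_antisymm
    · -- v (ψ u) ≤ L * u  (uses left smallness)
      by_cases h0 : 0 < ψ u
      · refine le_of_forall_pos_le_add fun ε hε => ?_
        obtain ⟨t, hts, htψ, hvar⟩ := evar_left_small hψm h0 (hgc (ψ u)) hfin'
          (ENNReal.ofReal_pos.2 hε) ENNReal.ofReal_ne_top
        have htA : t ∉ A u := fun h => absurd (csInf_le (hAbdd u) h) (not_le.2 htψ)
        have hvt : v t < L * u := by
          by_contra h
          exact htA ⟨hts, not_lt.1 h⟩
        have hdiff := hvdiff hts hψm htψ.le
        have : v (ψ u) - v t ≤ ε := by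
          rw [hdiff]
          calc (eVariationOn g (Set.Icc 0 1 ∩ Set.Icc t (ψ u))).toReal
              ≤ (ENNReal.ofReal ε).toReal := ENNReal.toReal_mono ENNReal.ofReal_ne_top hvar
            _ = ε := ENNReal.toReal_ofReal hε.le
        linarith
      · have hψ0 : ψ u = 0 := le_antisymm (not_lt.1 h0) hψm.1
        rw [hψ0, hv0]
        exact mul_nonneg hL0 hu.1
    · -- L * u ≤ v (ψ u)  (uses right smallness)
      by_cases h1 : ψ u < 1
      · refine le_of_forall_pos_le_add fun ε hε => ?_
        obtain ⟨t', ht's, hψt', hvar⟩ := evar_right_small hψm h1 (hgc (ψ u)) hfin'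
          (ENNReal.ofReal_pos.2 hε) ENNReal.ofReal_ne_top
        obtain ⟨ta, htaA, htat'⟩ := exists_lt_of_csInf_lt ⟨1, hAne u hu⟩ hψt'
        have hψta : ψ u ≤ ta := csInf_le (hAbdd u) htaA
        have hdiff := hvdiff hψm (hAsub u htaA) hψta
        have hmono : eVariationOn g (Set.Icc 0 1 ∩ Set.Icc (ψ u) ta) ≤
            eVariationOn g (Set.Icc 0 1 ∩ Set.Icc (ψ u) t') :=
          eVariationOn.mono g (Set.inter_subset_inter_right _ (Set.Icc_subset_Icc_right htat'.le))
        have : v ta - v (ψ u) ≤ ε := by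
          rw [hdiff]
          calc (eVariationOn g (Set.Icc 0 1 ∩ Set.Icc (ψ u) ta)).toReal
              ≤ (ENNReal.ofReal ε).toReal :=
              ENNReal.toReal_mono ENNReal.ofReal_ne_top (hmono.trans hvar)
            _ = ε := ENNReal.toReal_ofReal hε.le
        have := htaA.2
        linarith
      · have hψ1 : ψ u = 1 := le_antisymm hψm.2 (not_lt.1 h1)
        rw [hψ1, hv1]
        calc L * u ≤ L * 1 := mul_le_mul_of_nonneg_left hu.2 hL0
          _ = L := mul_one L
  -- definition of σ
  set σ : Set.Icc (0:ℝ) 1 → E2 := fun u => g (ψ u.1) with hσ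
  refine ⟨σ, ?_, ?_, ?_, ?_, ?_⟩
  · -- Lipschitz
    have haux : ∀ p q : Set.Icc (0:ℝ) 1, p.1 ≤ q.1 →
        edist (σ p) (σ q) ≤ ℓ.toNNReal * edist p q := by
      intro p q hpq
      have hψp := hψmem p.1 p.2
      have hψq := hψmem q.1 q.2
      have hψpq : ψ p.1 ≤ ψ q.1 := hψmono p.1 p.2 q.1 q.2 hpq
      have h1 : edist (σ p) (σ q) ≤ eVariationOn g (Set.Icc 0 1 ∩ Set.Icc (ψ p.1) (ψ q.1)) :=
        eVariationOn.edist_le g ⟨hψp, le_rfl, hψpq⟩ ⟨hψq, hψpq, le_rfl⟩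
      have hfin2 : eVariationOn g (Set.Icc 0 1 ∩ Set.Icc (ψ p.1) (ψ q.1)) ≠ ⊤ :=
        ((eVariationOn.mono g Set.inter_subset_left).trans_lt hfin'.lt_top).ne
      have h2 : eVariationOn g (Set.Icc 0 1 ∩ Set.Icc (ψ p.1) (ψ q.1)) =
          ENNReal.ofReal (L * (q.1 - p.1)) := by
        rw [← ENNReal.ofReal_toReal hfin2, ← hvdiff hψp hψq hψpq,
          hkey p.1 p.2, hkey q.1 q.2]
        ring_nf
      have h3 : edist p q = ENNReal.ofReal (q.1 - p.1) := by
        rw [Subtype.edist_eq, edist_dist, Real.dist_eq, abs_of_nonpos (by linarith), neg_sub]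
      rw [h3]
      refine h1.trans ?_
      rw [h2, ENNReal.ofReal_mul hL0, hL, ENNReal.ofReal_toReal hfin,
        ENNReal.coe_toNNReal hfin]
    intro p q
    rcases le_total p.1 q.1 with h | h
    · exact haux p q h
    · rw [edist_comm, edist_comm p q]
      exact haux q p h
  · rintro _ ⟨u, rfl⟩
    exact ⟨Set.projIcc 0 1 zero_le_one (ψ u.1), rfl⟩
  · show g (ψ 0) = γ ⟨0, by norm_num⟩
    have hψ0 : ψ 0 = 0 := by
      apply le_antisymm
      · exact csInf_le (hAbdd 0) ⟨h0m, by rw [hv0, mul_zero]⟩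
      · exact (hψmem 0 h0m).1
    rw [hψ0]
    show γ (Set.projIcc 0 1 zero_le_one 0) = _
    rw [Set.projIcc_left]
  · show g (ψ 1) = γ ⟨1, by norm_num⟩
    have hvψ1 : v (ψ 1) = v 1 := by rw [hkey 1 h1m, mul_one, hv1]
    have hψm1 := hψmem 1 h1m
    have hzero : variationOnFromTo g (Set.Icc 0 1) (ψ 1) 1 = 0 := by
      have hadd := variationOnFromTo.add lbv h0m hψm1 h1m
      show variationOnFromTo g (Set.Icc 0 1) (ψ 1) 1 = 0
      have : v (ψ 1) + variationOnFromTo g (Set.Icc 0 1) (ψ 1) 1 = v 1 := hadd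
      linarith [hvψ1]
    have hedist := variationOnFromTo.edist_zero_of_eq_zero lbv hψm1 h1m hzero
    have : g (ψ 1) = g 1 := by
      rwa [edist_eq_zero] at hedist
    rw [this]
    show γ (Set.projIcc 0 1 zero_le_one 1) = _
    rw [Set.projIcc_right]
  · have : eVariationOn σ Set.univ ≤ eVariationOn g (Set.Icc 0 1) := by
      exact eVariationOn.comp_le_of_monotoneOn g (t := (Set.univ : Set (Set.Icc (0:ℝ) 1)))
        (fun u : Set.Icc (0:ℝ) 1 => ψ u.1)
        (fun p hp q hq hpq => hψmono p.1 p.2 q.1 q.2 hpq)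
        (fun u _ => hψmem u.1 u.2)
    rw [← hcomp]
    exact this

lemma geoDist_sublevel_closed (P : Set E2) (hP : IsCompact P) (s : E2) (hs : s ∈ P)
    (c : ℝ≥0∞) : IsClosed { y : E2 | geoDist P s y ≤ c } := by
  by_cases hc : c = ⊤
  · have : { y : E2 | geoDist P s y ≤ c } = Set.univ :=
      Set.eq_univ_of_forall fun y => by simp [hc]
    rw [this]; exact isClosed_univ
  set T := { y : E2 | geoDist P s y ≤ c } with hT
  refine isClosed_of_closure_subset fun y hy => ?_
  set ι := E2 × ℝ with hι
  set F : Filter ι := (𝓝[T] y) ×ˢ (𝓝[Set.Ioi (0:ℝ)] 0) with hF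
  haveI hne1 : (𝓝[T] y).NeBot := mem_closure_iff_nhdsWithin_neBot.1 hy
  haveI hFne : F.NeBot := Filter.prod_neBot.2 ⟨hne1, nhdsGT_neBot 0⟩
  set G : Set ι := T ×ˢ Set.Ioo (0:ℝ) 1 with hG
  have hGF : G ∈ F := Filter.prod_mem_prod self_mem_nhdsWithin
    (Ioo_mem_nhdsGT_of_mem (show (0:ℝ) ∈ Set.Ico (0:ℝ) 1 by constructor <;> norm_num))
  set K : NNReal := (c + 1).toNNReal with hK
  -- select paths
  have hsel : ∀ i : ι, ∃ σi : Set.Icc (0:ℝ) 1 → E2,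
      LipschitzWith K σi ∧ Set.range σi ⊆ P ∧ σi ⟨0, by norm_num⟩ = s ∧
      (i ∈ G → σi ⟨1, by norm_num⟩ = i.1 ∧
        eVariationOn σi Set.univ < c + ENNReal.ofReal i.2) := by
    rintro ⟨z, ε⟩
    by_cases hiG : ((z, ε) : ι) ∈ G
    · obtain ⟨hzT, hε0, hε1⟩ : z ∈ T ∧ 0 < ε ∧ ε < 1 := ⟨hiG.1, hiG.2.1, hiG.2.2⟩
      have hlt : geoDist P s z < c + ENNReal.ofReal ε :=
        lt_of_le_of_lt hzT (ENNReal.lt_add_right hc (ENNReal.ofReal_pos.2 hε0).ne')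
      obtain ⟨l, ⟨γ, hcont, hrange, h0, h1, rfl⟩, hl⟩ := sInf_lt_iff.1 hlt
      have hfinγ : eVariationOn γ Set.univ ≠ ⊤ :=
        (hl.trans_le le_top).ne
      obtain ⟨σ', hlip', hrange', h0', h1', hvar'⟩ := reparam hcont hfinγ
      have hlipK : LipschitzWith K σ' := by
        refine hlip'.weaken ?_
        have h1 : eVariationOn γ Set.univ ≤ c + 1 := by
          refine hl.le.trans (add_le_add_right ?_ c)
          calc ENNReal.ofReal ε ≤ ENNReal.ofReal 1 := ENNReal.ofReal_le_ofReal hε1.le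
            _ = 1 := ENNReal.ofReal_one
        rw [hK]
        exact ENNReal.toNNReal_mono (by simp [hc]) h1
      refine ⟨σ', hlipK, hrange'.trans hrange, h0'.trans h0, fun _ => ?_⟩
      exact ⟨h1'.trans h1, lt_of_le_of_lt hvar' hl⟩
    · refine ⟨fun _ => s, (LipschitzWith.const s).weaken (zero_le : (0:NNReal) ≤ K), ?_, rfl, fun h => absurd h hiG⟩
      rintro _ ⟨τ, rfl⟩; exact hs
  choose σf hlip hrange h0 hGprop using hsel
  -- limit along an ultrafilter
  set u : Ultrafilter ι := Ultrafilter.of F with hu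
  have huF : ↑u ≤ F := Ultrafilter.of_le F
  have htend : ∀ τ : Set.Icc (0:ℝ) 1, ∃ z ∈ P, Tendsto (fun i => σf i τ) (↑u) (𝓝 z) := by
    intro τ
    have hmem : P ∈ u.map (fun i => σf i τ) :=
      Ultrafilter.mem_map.2 (Filter.univ_mem' fun i => hrange i ⟨τ, rfl⟩)
    obtain ⟨z, hzP, hconv⟩ := hP.ultrafilter_le_nhds (u.map (fun i => σf i τ))
      (le_principal_iff.2 hmem)
    exact ⟨z, hzP, hconv⟩
  choose σ hσP hσtend using htend
  have hσ0 : σ ⟨0, by norm_num⟩ = s :=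
    tendsto_nhds_unique (hσtend _) (Tendsto.congr (fun i => (h0 i).symm) tendsto_const_nhds)
  have hσ1 : σ ⟨1, by norm_num⟩ = y := by
    have hfst : Tendsto (fun i : ι => i.1) (↑u) (𝓝 y) :=
      ((tendsto_fst.mono_left huF).mono_right nhdsWithin_le_nhds)
    have hcongr : ∀ᶠ i in (↑u : Filter ι), i.1 = σf i ⟨1, by norm_num⟩ :=
      Filter.eventually_of_mem (huF hGF) fun i hi => ((hGprop i hi).1).symm
    exact tendsto_nhds_unique (hσtend _) (Tendsto.congr' hcongr hfst)
  have hlipσ : LipschitzWith K σ := fun τ τ' =>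
    le_of_tendsto ((hσtend τ).edist (hσtend τ'))
      (Filter.Eventually.of_forall fun i => hlip i τ τ')
  have hvar : eVariationOn σ Set.univ ≤ c := by
    by_contra hgt
    push_neg at hgt
    obtain ⟨b', hcb', hb'⟩ := exists_between hgt
    have hev1 : ∀ᶠ i in (↑u : Filter ι), b' < eVariationOn (σf i) Set.univ :=
      eVariationOn.lowerSemicontinuous_aux (fun τ _ => hσtend τ) hb'
    have hsnd : Tendsto (fun i : ι => ENNReal.ofReal i.2) F (𝓝 0) := by
      have h1 : Tendsto (fun i : ι => i.2) F (𝓝 0) :=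
        tendsto_snd.mono_right nhdsWithin_le_nhds
      have := (ENNReal.continuous_ofReal.tendsto 0).comp h1
      simpa [Function.comp_def] using this
    have hη : (0:ℝ≥0∞) < b' - c := tsub_pos_iff_lt.2 hcb'
    have hev2 : ∀ᶠ i in (↑u : Filter ι), ENNReal.ofReal i.2 < b' - c :=
      Filter.eventually_of_mem (huF (hsnd (Iio_mem_nhds hη))) fun i hi => hi
    have hev3 : ∀ᶠ i in (↑u : Filter ι), i ∈ G :=
      Filter.eventually_of_mem (huF hGF) fun i hi => hi
    obtain ⟨i, hib, hie, hiG⟩ := (hev1.and (hev2.and hev3)).exists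
    have h1 : eVariationOn (σf i) Set.univ < c + (b' - c) :=
      lt_of_lt_of_le (hGprop i hiG).2 (add_le_add_right hie.le c)
    rw [add_tsub_cancel_of_le hcb'.le] at h1
    exact absurd (hib.trans h1) (lt_irrefl b')
  refine le_trans (sInf_le ?_) hvar
  exact ⟨σ, hlipσ.continuous, fun _ ⟨τ, hτ⟩ => hτ ▸ hσP τ, hσ0, hσ1, rfl⟩

/-- Existence of a min-sum optimal pair for the quickest pair-visibility problem
in a compact planar set. -/
theorem minsum_optimal_pair_exists (P : Set E2) (hP : IsCompact P)
    (s t : E2) (hs : s ∈ P) (ht : t ∈ P) :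
    ∃ s' t' : E2, s' ∈ P ∧ t' ∈ P ∧ segment ℝ s' t' ⊆ P ∧
      ∀ p q : E2, p ∈ P → q ∈ P → segment ℝ p q ⊆ P →
        geoDist P s s' + geoDist P t t' ≤ geoDist P s p + geoDist P t q := by
  have h1 : LowerSemicontinuous (geoDist P s) :=
    lowerSemicontinuous_iff_isClosed_preimage.2 fun c => geoDist_sublevel_closed P hP s hs c
  have h2 : LowerSemicontinuous (geoDist P t) :=
    lowerSemicontinuous_iff_isClosed_preimage.2 fun c => geoDist_sublevel_closed P hP t ht c
  set F : E2 × E2 → ℝ≥0∞ := fun z => geoDist P s z.1 + geoDist P t z.2 with hF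
  have hFlsc : LowerSemicontinuous F :=
    LowerSemicontinuous.add (LowerSemicontinuous.comp (f := geoDist P s) (g := Prod.fst) h1 continuous_fst) (LowerSemicontinuous.comp (f := geoDist P t) (g := Prod.snd) h2 continuous_snd)
  set V : Set (E2 × E2) := {z : E2 × E2 | segment ℝ z.1 z.2 ⊆ P} with hV
  have hVP : V ⊆ P ×ˢ P := by
    rintro ⟨p, q⟩ hz
    exact ⟨hz (left_mem_segment ℝ p q), hz (right_mem_segment ℝ p q)⟩
  have hVclosed : IsClosed V := by
    have : V = ⋂ θ ∈ Set.Icc (0:ℝ) 1,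
        (fun z : E2 × E2 => (1 - θ) • z.1 + θ • z.2) ⁻¹' P := by
      ext z
      simp only [hV, Set.mem_setOf_eq, Set.mem_iInter, Set.mem_preimage]
      rw [segment_eq_image ℝ z.1 z.2]
      constructor
      · intro h θ hθ; exact h ⟨θ, hθ, rfl⟩
      · rintro h _ ⟨θ, hθ, rfl⟩; exact h θ hθ
    rw [this]
    refine isClosed_biInter fun θ _ => IsClosed.preimage ?_ hP.isClosed
    fun_prop
  have hVcomp : IsCompact V := (hP.prod hP).of_isClosed_subset hVclosed hVP
  have hVne : ((s, s) : E2 × E2) ∈ V := by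
    simp only [hV, Set.mem_setOf_eq, segment_same]
    exact Set.singleton_subset_iff.2 hs
  set m : ℝ≥0∞ := sInf (F '' V) with hm
  by_cases hmtop : m = ⊤
  · refine ⟨s, s, hs, hs, hVne, fun p q hp hq hseg => ?_⟩
    have h1 : F (p, q) = ⊤ := top_unique <| hmtop ▸ sInf_le ⟨(p, q), hseg, rfl⟩
    show F (s, s) ≤ F (p, q)
    rw [h1]; exact le_top
  · -- directed intersection of compact sublevel sets
    set ι := {a : ℝ≥0∞ // m < a} with hι
    have : Nonempty ι := ⟨⟨⊤, lt_top_iff_ne_top.2 hmtop⟩⟩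
    set K : ι → Set (E2 × E2) := fun a => V ∩ {z | F z ≤ a.1} with hK
    have hKclosed : ∀ a, IsClosed (K a) := fun a =>
      hVclosed.inter (lowerSemicontinuous_iff_isClosed_preimage.1 hFlsc a.1)
    have hKcomp : ∀ a, IsCompact (K a) := fun a =>
      hVcomp.inter_right (lowerSemicontinuous_iff_isClosed_preimage.1 hFlsc a.1)
    have hKne : ∀ a, (K a).Nonempty := by
      rintro ⟨a, ha⟩
      obtain ⟨w, ⟨z, hzV, rfl⟩, hwa⟩ := sInf_lt_iff.1 ha
      exact ⟨z, hzV, hwa.le⟩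
    have hKdir : Directed (· ⊇ ·) K := by
      rintro ⟨a, ha⟩ ⟨b, hb⟩
      refine ⟨⟨min a b, lt_min ha hb⟩, ?_, ?_⟩
      · exact Set.inter_subset_inter_right _ fun z hz =>
          le_trans (a := F z) hz (min_le_left _ _)
      · exact Set.inter_subset_inter_right _ fun z hz =>
          le_trans (a := F z) hz (min_le_right _ _)
    obtain ⟨z, hz⟩ := IsCompact.nonempty_iInter_of_directed_nonempty_isCompact_isClosed
      K hKdir hKne hKcomp hKclosed
    have hzV : z ∈ V := (Set.mem_iInter.1 hz ⟨⊤, lt_top_iff_ne_top.2 hmtop⟩).1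
    have hzm : F z ≤ m := by
      by_contra h
      push_neg at h
      obtain ⟨a, hma, haz⟩ := exists_between h
      exact absurd ((Set.mem_iInter.1 hz ⟨a, hma⟩).2) (not_le.2 haz)
    refine ⟨z.1, z.2, (hVP hzV).1, (hVP hzV).2, hzV, fun p q hp hq hseg => ?_⟩
    exact hzm.trans (sInf_le ⟨(p, q), hseg, rfl⟩)
end

section
/- Let P be a subset of the Euclidean plane and s, t ∈ P. Suppose (s*, t*) is a min-sum optimal pair: s*, t* ∈ P, segment ℝ s* t* ⊆ P, and for every p, q ∈ P with segment ℝ p q ⊆ P one has d_P(s, s*) + d_P(t, t*) ≤ d_P(s, p) + d_P(t, q). Suppose moreover that d_P(s, s*) < ∞, d_P(t, t*) < ∞, and that the segment from s* to t* is contained in the topological interior of P. Then s* = s and t* = t (so s and t are themselves mutually visible in P). Equivalently, unless s and t see each other, the segment joining any min-sum optimal pair at finite distance must meet the frontier of P. -/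
open scoped ENNReal

namespace MyAux

abbrev I01 : Type := Set.Icc (0:ℝ) 1

def z0 : I01 := ⟨0, by norm_num⟩
def z1 : I01 := ⟨1, by norm_num⟩

lemma geoDist_le_initial (P : Set E2) (γ : I01 → E2) (hc : Continuous γ)
    (hr : Set.range γ ⊆ P) (u : I01) :
    geoDist P (γ z0) (γ u) ≤ eVariationOn γ (Set.Icc z0 u) := by
  set φ : I01 → I01 := fun x => ⟨u.1 * x.1,
    ⟨mul_nonneg u.2.1 x.2.1, le_trans (mul_le_of_le_one_right u.2.1 x.2.2) u.2.2⟩⟩ with hφdef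
  have hφc : Continuous φ := Continuous.subtype_mk (continuous_const.mul continuous_subtype_val) _
  have hmono : MonotoneOn φ Set.univ := by
    intro x _ y _ hxy
    simp only [hφdef, Subtype.mk_le_mk]
    exact mul_le_mul_of_nonneg_left (Subtype.coe_le_coe.mpr hxy) u.2.1
  have himg : φ '' Set.univ ⊆ Set.Icc z0 u := by
    rintro _ ⟨x, -, rfl⟩
    constructor
    · exact Subtype.mk_le_mk.mpr (mul_nonneg u.2.1 x.2.1)
    · exact Subtype.mk_le_mk.mpr (mul_le_of_le_one_right u.2.1 x.2.2)
  have hvar : eVariationOn (γ ∘ φ) Set.univ ≤ eVariationOn γ (Set.Icc z0 u) := by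
    rw [eVariationOn.comp_eq_of_monotoneOn γ φ hmono]
    exact eVariationOn.mono γ himg
  refine le_trans (sInf_le ?_) hvar
  refine ⟨γ ∘ φ, hc.comp hφc, (Set.range_comp_subset_range φ γ).trans hr, ?_, ?_, rfl⟩
  · exact congrArg γ (Subtype.ext (by show u.1 * 0 = (0:ℝ); ring))
  · exact congrArg γ (Subtype.ext (by show u.1 * 1 = u.1; ring))

lemma key (P : Set E2) (s sStar tStar : E2) (hsStar : sStar ∈ P)
    (hopt' : ∀ p ∈ P, segment ℝ p tStar ⊆ P → geoDist P s sStar ≤ geoDist P s p)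
    (hsfin : geoDist P s sStar < ⊤)
    (hint : segment ℝ sStar tStar ⊆ interior P) : sStar = s := by
  by_contra hne
  have hD : 0 < dist s sStar := dist_pos.mpr (fun h => hne h.symm)
  have hcmp : IsCompact (segment ℝ sStar tStar) := by
    rw [segment_eq_image]
    exact isCompact_Icc.image (by fun_prop)
  obtain ⟨δ, hδ, hthick⟩ := hcmp.exists_thickening_subset_open isOpen_interior hint
  -- any point δ-close to sStar sees tStar
  have hsegP : ∀ p : E2, dist p sStar < δ → segment ℝ p tStar ⊆ P := by
    intro p hp x hx
    obtain ⟨a, b, ha, hb, hab, rfl⟩ := hx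
    have hy : a • sStar + b • tStar ∈ segment ℝ sStar tStar := ⟨a, b, ha, hb, hab, rfl⟩
    have hdist : dist (a • p + b • tStar) (a • sStar + b • tStar) < δ := by
      rw [dist_eq_norm]
      have h1 : a • p + b • tStar - (a • sStar + b • tStar) = a • (p - sStar) := by module
      rw [h1, norm_smul, Real.norm_eq_abs, abs_of_nonneg ha]
      calc a * ‖p - sStar‖ ≤ 1 * ‖p - sStar‖ := by
            apply mul_le_mul_of_nonneg_right _ (norm_nonneg _)
            linarith
        _ = dist p sStar := by rw [one_mul, dist_eq_norm]
        _ < δ := hp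
    have : a • p + b • tStar ∈ Metric.thickening δ (segment ℝ sStar tStar) :=
      Metric.mem_thickening_iff.mpr ⟨_, hy, hdist⟩
    exact interior_subset (hthick this)
  set r : ℝ := min δ (dist s sStar) / 2 with hrdef
  have hr0 : 0 < r := by positivity
  have hrδ : r < δ := by
    have := min_le_left δ (dist s sStar); simp only [hrdef]; linarith
  have hrD : r < dist s sStar := by
    have := min_le_right δ (dist s sStar); simp only [hrdef]; linarith
  set d := geoDist P s sStar with hd
  have hdlt : d < d + ENNReal.ofReal r :=
    ENNReal.lt_add_right hsfin.ne (by simp [ENNReal.ofReal_pos.mpr hr0, (ENNReal.ofReal_pos.mpr hr0).ne'])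
  have hsinf : sInf { l : ℝ≥0∞ | ∃ γ : I01 → E2,
      Continuous γ ∧ Set.range γ ⊆ P ∧
      γ ⟨0, by norm_num⟩ = s ∧ γ ⟨1, by norm_num⟩ = sStar ∧
      eVariationOn γ Set.univ = l } < d + ENNReal.ofReal r := hdlt
  obtain ⟨L, hL, hLlt⟩ := sInf_lt_iff.mp hsinf
  obtain ⟨γ, hγc, hγr, hγ0, hγ1, hγvar⟩ := hL
  have hγ0' : γ z0 = s := hγ0
  have hγ1' : γ z1 = sStar := hγ1
  -- IVT: find a point on the path at distance exactly r from sStar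
  haveI : PreconnectedSpace I01 := Subtype.preconnectedSpace isPreconnected_Icc
  have hfc : Continuous (fun x : I01 => dist (γ x) sStar) := hγc.dist continuous_const
  have hrmem : r ∈ Set.Icc (dist (γ z1) sStar) (dist (γ z0) sStar) := by
    rw [hγ0', hγ1', dist_self]
    exact ⟨hr0.le, hrD.le⟩
  obtain ⟨u, hu⟩ := intermediate_value_univ z1 z0 hfc hrmem
  set p := γ u with hpdef
  have hu' : dist p sStar = r := hu
  have hpP : p ∈ P := hγr (Set.mem_range_self u)
  have hedist : edist p sStar = ENNReal.ofReal r := by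
    rw [edist_dist, hu']
  have h0u : z0 ≤ u := Subtype.mk_le_mk.mpr u.2.1
  have hu1 : u ≤ z1 := Subtype.mk_le_mk.mpr u.2.2
  have hsplit : eVariationOn γ (Set.Icc z0 u) + eVariationOn γ (Set.Icc u z1)
      = eVariationOn γ (Set.Icc z0 z1) := by
    have := eVariationOn.Icc_add_Icc γ h0u hu1 (Set.mem_univ u)
    simpa [Set.univ_inter] using this
  have hle : eVariationOn γ (Set.Icc z0 z1) ≤ L :=
    hγvar ▸ eVariationOn.mono γ (Set.subset_univ _)
  have hbound : geoDist P s p + ENNReal.ofReal r ≤ L := by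
    calc geoDist P s p + ENNReal.ofReal r
        ≤ eVariationOn γ (Set.Icc z0 u) + eVariationOn γ (Set.Icc u z1) := by
          apply add_le_add
          · exact hγ0' ▸ geoDist_le_initial P γ hγc hγr u
          · rw [← hedist, ← hγ1']
            exact eVariationOn.edist_le γ ⟨le_rfl, hu1⟩ ⟨hu1, le_rfl⟩
      _ = eVariationOn γ (Set.Icc z0 z1) := hsplit
      _ ≤ L := hle
  have hlt : geoDist P s p < d := by
    have h := lt_of_le_of_lt hbound hLlt
    exact (ENNReal.add_lt_add_iff_right ENNReal.ofReal_ne_top).mp h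
  have hge : d ≤ geoDist P s p := hopt' p hpP (hsegP p (by rw [hu']; exact hrδ))
  exact absurd hge (not_le.mpr hlt)

end MyAux

/-- If a min-sum optimal pair (at finite geodesic distance) is joined by a segment
avoiding the frontier of `P` (i.e., lying in the interior of `P`), then the optimal
pair is `(s, t)` itself, so `s` and `t` see each other. -/
theorem minsum_optimal_segment_meets_frontier (P : Set E2) (s t : E2)
    (hs : s ∈ P) (ht : t ∈ P) (sStar tStar : E2)
    (hsStar : sStar ∈ P) (htStar : tStar ∈ P)
    (hseg : segment ℝ sStar tStar ⊆ P)
    (hopt : ∀ p q : E2, p ∈ P → q ∈ P → segment ℝ p q ⊆ P →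
      geoDist P s sStar + geoDist P t tStar ≤ geoDist P s p + geoDist P t q)
    (hsfin : geoDist P s sStar < ⊤) (htfin : geoDist P t tStar < ⊤)
    (hint : segment ℝ sStar tStar ⊆ interior P) :
    sStar = s ∧ tStar = t := by
  constructor
  · apply MyAux.key P s sStar tStar hsStar ?_ hsfin hint
    intro p hp hseg'
    have h := hopt p tStar hp htStar hseg'
    exact (ENNReal.add_le_add_iff_right htfin.ne).mp h
  · apply MyAux.key P t tStar sStar htStar ?_ htfin (by rw [segment_symm]; exact hint)
    intro p hp hseg'
    have h := hopt sStar p hsStar hp (by rw [segment_symm]; exact hseg')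
    exact (ENNReal.add_le_add_iff_left hsfin.ne).mp h
end

section
/- Let P be a subset of the Euclidean plane and s, t ∈ P. Suppose (s*, t*) is a min-max optimal pair: s*, t* ∈ P, segment ℝ s* t* ⊆ P, and for every p, q ∈ P with segment ℝ p q ⊆ P one has max(d_P(s, s*), d_P(t, t*)) ≤ max(d_P(s, p), d_P(t, q)). Suppose moreover that d_P(s, s*) < ∞, d_P(t, t*) < ∞, and that the segment from s* to t* is contained in the topological interior of P. Then s* = s and t* = t (so s and t are themselves mutually visible in P). -/
open scoped ENNReal

lemma edist_le_geoDist {P : Set E2} {x y : E2} : edist x y ≤ geoDist P x y := by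
  refine le_sInf ?_
  rintro l ⟨γ, hc, hr, h0, h1, rfl⟩
  rw [← h0, ← h1]
  exact eVariationOn.edist_le γ (Set.mem_univ _) (Set.mem_univ _)

lemma geoDist_self {P : Set E2} {x : E2} (hx : x ∈ P) : geoDist P x x = 0 := by
  refine le_antisymm (sInf_le ?_) (zero_le)
  refine ⟨fun _ => x, continuous_const, ?_, rfl, rfl, ?_⟩
  · rintro y ⟨_, rfl⟩; exact hx
  · exact eVariationOn.constant_on (by
      rintro a ⟨_, _, rfl⟩ b ⟨_, _, rfl⟩; rfl)

/-- Key shrinking lemma: one can move the endpoint of a finite-length geodesic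
slightly towards the start, strictly decreasing geodesic distance. -/
lemma geoDist_shrink {P : Set E2} {x xs : E2} (hx : x ∈ P) (hxs : xs ∈ P)
    (hfin : geoDist P x xs < ⊤) {ε : ℝ} (hε : 0 < ε) :
    ∃ p ∈ P, dist p xs < ε ∧ geoDist P x p ≤ geoDist P x xs ∧
      (xs ≠ x → geoDist P x p < geoDist P x xs) := by
  by_cases hne : xs = x
  · exact ⟨xs, hxs, by simpa using hε, le_rfl, fun h => absurd hne h⟩
  · -- nontrivial case
    have hd0 : 0 < dist x xs := dist_pos.mpr (fun h => hne h.symm)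
    set c : ℝ := min (ε / 2) (dist x xs / 2) with hc
    have hc0 : 0 < c := lt_min (by linarith) (by linarith)
    have hcε : c < ε := lt_of_le_of_lt (min_le_left _ _) (by linarith)
    have hcd : c < dist x xs := lt_of_le_of_lt (min_le_right _ _) (by linarith)
    set c' : ℝ≥0∞ := ENNReal.ofReal c with hc'
    have hc'0 : c' ≠ 0 := (ENNReal.ofReal_pos.mpr hc0).ne'
    have hc'top : c' ≠ ⊤ := ENNReal.ofReal_ne_top
    set δ : ℝ≥0∞ := c' / 2 with hδ
    have hδ0 : δ ≠ 0 := by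
      simp [hδ, ENNReal.div_eq_zero_iff, hc'0]
    have hδc' : δ < c' := ENNReal.half_lt_self hc'0 hc'top
    set D := geoDist P x xs with hD
    have hlt : D < D + δ := ENNReal.lt_add_right hfin.ne hδ0
    rw [hD, geoDist, sInf_lt_iff] at hlt
    obtain ⟨l, ⟨γ, hγc, hγr, hγ0, hγ1, hlen⟩, hl⟩ := hlt
    -- find a point on the path at distance exactly c from xs
    set f : ℝ → ℝ := fun r => dist (γ (Set.projIcc (0:ℝ) 1 zero_le_one r)) xs with hf
    have hfc : Continuous f := (hγc.comp continuous_projIcc).dist continuous_const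
    have e0 : Set.projIcc (0:ℝ) 1 zero_le_one 0 = ⟨0, by norm_num⟩ := by
      apply Subtype.ext; simp [Set.coe_projIcc]
    have e1 : Set.projIcc (0:ℝ) 1 zero_le_one 1 = ⟨1, by norm_num⟩ := by
      apply Subtype.ext; simp [Set.coe_projIcc]
    have hf0 : f 0 = dist x xs := by
      show dist (γ (Set.projIcc (0:ℝ) 1 zero_le_one 0)) xs = dist x xs
      rw [e0, hγ0]
    have hf1 : f 1 = 0 := by
      show dist (γ (Set.projIcc (0:ℝ) 1 zero_le_one 1)) xs = 0
      rw [e1, hγ1, dist_self]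
    have hmem : c ∈ Set.Icc (f 1) (f 0) := by
      rw [hf0, hf1]; exact ⟨hc0.le, hcd.le⟩
    obtain ⟨r, hr, hrc⟩ := intermediate_value_Icc' zero_le_one hfc.continuousOn hmem
    set u : Set.Icc (0:ℝ) 1 := Set.projIcc (0:ℝ) 1 zero_le_one r with hu
    set p : E2 := γ u with hp
    have hpP : p ∈ P := hγr ⟨u, rfl⟩
    have hdist : dist p xs = c := hrc
    refine ⟨p, hpP, by rw [hdist]; exact hcε, ?_⟩
    -- split the variation at u
    have h0u : (⟨0, by norm_num⟩ : Set.Icc (0:ℝ) 1) ≤ u := Subtype.mk_le_mk.mpr u.2.1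
    have hu1 : u ≤ (⟨1, by norm_num⟩ : Set.Icc (0:ℝ) 1) := Subtype.mk_le_mk.mpr u.2.2
    have hIcc : Set.Icc (⟨0, by norm_num⟩ : Set.Icc (0:ℝ) 1) ⟨1, by norm_num⟩ = Set.univ := by
      ext v
      simp only [Set.mem_univ, iff_true]
      exact Set.mem_Icc.mpr ⟨Subtype.mk_le_mk.mpr v.2.1, Subtype.mk_le_mk.mpr v.2.2⟩
    have hsplit := eVariationOn.Icc_add_Icc γ h0u hu1 (Set.mem_univ u)
    rw [Set.univ_inter, Set.univ_inter, Set.univ_inter, hIcc, hlen] at hsplit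
    -- the tail has length at least c'
    have htail : c' ≤ eVariationOn γ (Set.Icc u ⟨1, by norm_num⟩) := by
      have := eVariationOn.edist_le γ (s := Set.Icc u ⟨1, by norm_num⟩)
        (x := u) (y := (⟨1, by norm_num⟩ : Set.Icc (0:ℝ) 1))
        (Set.mem_Icc.mpr ⟨le_rfl, hu1⟩) (Set.mem_Icc.mpr ⟨hu1, le_rfl⟩)
      rw [hγ1] at this
      refine le_trans ?_ this
      rw [edist_dist, hdist]
    -- the head gives a path from x to p
    have hhead : geoDist P x p ≤ eVariationOn γ (Set.Icc ⟨0, by norm_num⟩ u) := by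
      set h : Set.Icc (0:ℝ) 1 → Set.Icc (0:ℝ) 1 := fun v =>
        ⟨min v.1 u.1, le_min v.2.1 u.2.1, le_trans (min_le_left _ _) v.2.2⟩ with hh
      have hhc : Continuous h :=
        Continuous.subtype_mk (continuous_subtype_val.min continuous_const) _
      have hhmono : MonotoneOn h Set.univ := fun a _ b _ hab =>
        Subtype.mk_le_mk.mpr (min_le_min hab le_rfl)
      have himg : h '' Set.univ = Set.Icc ⟨0, by norm_num⟩ u := by
        ext w
        constructor
        · rintro ⟨v, -, rfl⟩
          exact ⟨Subtype.mk_le_mk.mpr (le_min v.2.1 u.2.1), Subtype.mk_le_mk.mpr (min_le_right _ _)⟩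
        · rintro ⟨-, hw2⟩
          exact ⟨w, Set.mem_univ _, Subtype.ext (min_eq_left hw2)⟩
      refine sInf_le ⟨γ ∘ h, hγc.comp hhc, ?_, ?_, ?_, ?_⟩
      · rintro y ⟨v, rfl⟩; exact hγr ⟨h v, rfl⟩
      · show γ (h _) = x
        rw [show h ⟨0, by norm_num⟩ = ⟨0, by norm_num⟩ from
          Subtype.ext (min_eq_left u.2.1), hγ0]
      · show γ (h _) = p
        rw [show h ⟨1, by norm_num⟩ = u from Subtype.ext (min_eq_right u.2.2)]
      · rw [eVariationOn.comp_eq_of_monotoneOn γ h hhmono, himg]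
    -- combine
    have hkey : geoDist P x p + c' < D + c' := by
      calc geoDist P x p + c'
          ≤ eVariationOn γ (Set.Icc ⟨0, by norm_num⟩ u) +
            eVariationOn γ (Set.Icc u ⟨1, by norm_num⟩) := add_le_add hhead htail
        _ = l := hsplit
        _ < D + δ := hl
        _ < D + c' := ENNReal.add_lt_add_left hfin.ne hδc'
    have hfinal : geoDist P x p < D := by
      have := (ENNReal.add_lt_add_iff_right hc'top).mp hkey
      exact this
    exact ⟨hfinal.le, fun _ => hfinal⟩

/-- If a min-max optimal pair (at finite geodesic distance) is joined by a segment
avoiding the frontier of `P` (i.e., lying in the interior of `P`), then the optimal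
pair is `(s, t)` itself, so `s` and `t` see each other. -/
theorem minmax_optimal_segment_meets_frontier (P : Set E2) (s t : E2)
    (hs : s ∈ P) (ht : t ∈ P) (sStar tStar : E2)
    (hsStar : sStar ∈ P) (htStar : tStar ∈ P)
    (hseg : segment ℝ sStar tStar ⊆ P)
    (hopt : ∀ p q : E2, p ∈ P → q ∈ P → segment ℝ p q ⊆ P →
      max (geoDist P s sStar) (geoDist P t tStar) ≤ max (geoDist P s p) (geoDist P t q))
    (hsfin : geoDist P s sStar < ⊤) (htfin : geoDist P t tStar < ⊤)
    (hint : segment ℝ sStar tStar ⊆ interior P) :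
    sStar = s ∧ tStar = t := by
  -- find a thickening of the segment inside P
  have hcompact : IsCompact (segment ℝ sStar tStar) := by
    rw [segment_eq_image]
    exact isCompact_Icc.image
      (((continuous_const.sub continuous_id).smul continuous_const).add
        (continuous_id.smul continuous_const))
  obtain ⟨ε, hε, hthick⟩ := hcompact.exists_thickening_subset_open isOpen_interior hint
  obtain ⟨p, hpP, hpd, hple, hplt⟩ := geoDist_shrink hs hsStar hsfin hε
  obtain ⟨q, hqP, hqd, hqle, hqlt⟩ := geoDist_shrink ht htStar htfin hε
  -- the segment p q stays in P
  have hpq : segment ℝ p q ⊆ P := by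
    rintro z ⟨a, b, ha, hb, hab, rfl⟩
    refine interior_subset (hthick ?_)
    rw [Metric.mem_thickening_iff]
    refine ⟨a • sStar + b • tStar, ⟨a, b, ha, hb, hab, rfl⟩, ?_⟩
    calc dist (a • p + b • q) (a • sStar + b • tStar)
        ≤ dist (a • p) (a • sStar) + dist (b • q) (b • tStar) := dist_add_add_le _ _ _ _
      _ = a * dist p sStar + b * dist q tStar := by
          rw [dist_smul₀, dist_smul₀, Real.norm_of_nonneg ha, Real.norm_of_nonneg hb]
      _ < ε := by
          rcases eq_or_lt_of_le ha with h | h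
          · have hb1 : b = 1 := by linarith
            rw [← h, hb1]; simpa using hqd
          · nlinarith [mul_lt_mul_of_pos_left hpd h, mul_le_mul_of_nonneg_left hqd.le hb,
              dist_nonneg (x := p) (y := sStar)]
  have hmain := hopt p q hpP hqP hpq
  constructor
  · by_contra hne
    have h1 : geoDist P s p < max (geoDist P s sStar) (geoDist P t tStar) :=
      lt_of_lt_of_le (hplt hne) (le_max_left _ _)
    have h2 : geoDist P t q < max (geoDist P s sStar) (geoDist P t tStar) := by
      by_cases hqe : tStar = t
      · have hq0 : geoDist P t q = 0 := by
          have := hqle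
          rw [hqe, geoDist_self ht] at this
          exact le_antisymm this (zero_le)
        have hpos : (0:ℝ≥0∞) < geoDist P s sStar :=
          lt_of_lt_of_le (by
            exact edist_pos.mpr fun h => hne h.symm) edist_le_geoDist
        rw [hq0]
        exact lt_of_lt_of_le hpos (le_max_left _ _)
      · exact lt_of_lt_of_le (hqlt hqe) (le_max_right _ _)
    exact absurd hmain (not_le.mpr (max_lt h1 h2))
  · by_contra hne
    have h1 : geoDist P t q < max (geoDist P s sStar) (geoDist P t tStar) :=
      lt_of_lt_of_le (hqlt hne) (le_max_right _ _)
    have h2 : geoDist P s p < max (geoDist P s sStar) (geoDist P t tStar) := by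
      by_cases hpe : sStar = s
      · have hp0 : geoDist P s p = 0 := by
          have := hple
          rw [hpe, geoDist_self hs] at this
          exact le_antisymm this (zero_le)
        have hpos : (0:ℝ≥0∞) < geoDist P t tStar :=
          lt_of_lt_of_le (by
            exact edist_pos.mpr fun h => hne h.symm) edist_le_geoDist
        rw [hp0]
        exact lt_of_lt_of_le hpos (le_max_right _ _)
      · exact lt_of_lt_of_le (hplt hpe) (le_max_left _ _)
    exact absurd hmain (not_le.mpr (max_lt h2 h1))
end

section
/- Let P be a subset of the Euclidean plane, let s, t ∈ P, and let γ : [0,1] → E be a continuous path with range γ ⊆ P, γ 0 = s, γ 1 = t, whose length eVariationOn γ Set.univ is finite and equal to the geodesic distance d_P(s, t) (i.e., γ is a shortest path from s to t in P). If 0 ≤ t₁ ≤ t₂ ≤ 1 are parameters such that the points y = γ t₁ and y' = γ t₂ are mutually visible, i.e., segment ℝ y y' ⊆ P, then the portion of γ between t₁ and t₂ is a straight segment: eVariationOn γ (Set.Icc t₁ t₂) = edist y y', and segment ℝ y y' ⊆ Set.range γ. -/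
open scoped ENNReal

/-- variation of the straight-line path is at most the distance of the endpoints. -/
lemma line_var_le (y y' : E2) :
    eVariationOn (fun θ : ℝ => y + θ • (y' - y)) (Set.Icc 0 1) ≤ edist y y' := by
  have hL : LipschitzWith ‖y' - y‖₊ (fun θ : ℝ => y + θ • (y' - y)) := by
    apply LipschitzWith.of_dist_le_mul
    intro a b
    simp only [dist_eq_norm, add_sub_add_left_eq_sub, ← sub_smul, norm_smul,
      Real.norm_eq_abs]
    rw [mul_comm, coe_nnnorm]
  have h1 : eVariationOn ((fun θ : ℝ => y + θ • (y' - y)) ∘ id) (Set.Icc 0 1)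
      ≤ ‖y' - y‖₊ * eVariationOn (id : ℝ → ℝ) (Set.Icc 0 1) :=
    hL.lipschitzOnWith.comp_eVariationOn_le (Set.mapsTo_univ _ _)
  have h2 : eVariationOn (id : ℝ → ℝ) (Set.Icc 0 1) ≤ ENNReal.ofReal (1 - 0) := by
    have := (monotone_id.monotoneOn (Set.Icc (0:ℝ) 1)).eVariationOn_le
      (Set.left_mem_Icc.2 zero_le_one) (Set.right_mem_Icc.2 zero_le_one)
    simpa using this
  calc eVariationOn (fun θ : ℝ => y + θ • (y' - y)) (Set.Icc 0 1)
      ≤ ‖y' - y‖₊ * eVariationOn (id : ℝ → ℝ) (Set.Icc 0 1) := h1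
    _ ≤ ‖y' - y‖₊ * ENNReal.ofReal (1 - 0) := by gcongr
    _ = ‖y' - y‖₊ := by norm_num
    _ = edist y y' := by rw [edist_nndist, nndist_comm, nndist_eq_nnnorm_sub]

/-- If `γ` is a shortest path in `P` from `s` to `t` and two of its points
`γ t₁`, `γ t₂` are mutually visible in `P`, then the portion of `γ` between
`t₁` and `t₂` is the straight segment joining them: its length equals the
Euclidean (extended) distance and the segment is contained in the range of `γ`. -/
theorem shortest_path_contains_visible_segment (P : Set E2) (s t : E2)
    (hs : s ∈ P) (ht : t ∈ P)
    (γ : Set.Icc (0:ℝ) 1 → E2) (hγ : Continuous γ) (hran : Set.range γ ⊆ P)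
    (h0 : γ ⟨0, by norm_num⟩ = s) (h1 : γ ⟨1, by norm_num⟩ = t)
    (hfin : eVariationOn γ Set.univ < ⊤)
    (hshortest : eVariationOn γ Set.univ = geoDist P s t)
    (t₁ t₂ : Set.Icc (0:ℝ) 1) (h12 : t₁ ≤ t₂)
    (hvis : segment ℝ (γ t₁) (γ t₂) ⊆ P) :
    eVariationOn γ (Set.Icc t₁ t₂) = edist (γ t₁) (γ t₂) ∧
      segment ℝ (γ t₁) (γ t₂) ⊆ Set.range γ := by
  classical
  set y := γ t₁ with hy
  set y' := γ t₂ with hy'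
  by_cases hdeg : t₁ = t₂
  · subst hdeg
    constructor
    · rw [Set.Icc_self, eVariationOn.subsingleton γ Set.subsingleton_singleton, edist_self]
    · rw [segment_same]
      rintro z rfl
      exact ⟨t₁, rfl⟩
  have hlt : (t₁ : ℝ) < (t₂ : ℝ) :=
    lt_of_le_of_ne h12 (fun h => hdeg (Subtype.ext h))
  set z0 : Set.Icc (0:ℝ) 1 := ⟨0, by norm_num⟩ with hz0
  set z1 : Set.Icc (0:ℝ) 1 := ⟨1, by norm_num⟩ with hz1
  have hz0le : ∀ u : Set.Icc (0:ℝ) 1, z0 ≤ u := fun u => u.2.1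
  have hlez1 : ∀ u : Set.Icc (0:ℝ) 1, u ≤ z1 := fun u => u.2.2
  have huniv : (Set.univ : Set (Set.Icc (0:ℝ) 1)) = Set.Icc z0 z1 := by
    ext u; simp [hz0le u, hlez1 u]
  have hsplit : ∀ f : Set.Icc (0:ℝ) 1 → E2,
      eVariationOn f Set.univ =
        eVariationOn f (Set.Icc z0 t₁) + eVariationOn f (Set.Icc t₁ t₂) +
          eVariationOn f (Set.Icc t₂ z1) := by
    intro f
    have e1 := eVariationOn.Icc_add_Icc f (s := Set.univ) (hz0le t₁) h12 (Set.mem_univ t₁)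
    have e2 := eVariationOn.Icc_add_Icc f (s := Set.univ) (hz0le t₂) (hlez1 t₂)
      (Set.mem_univ t₂)
    simp only [Set.univ_inter] at e1 e2
    rw [huniv, ← e2, ← e1]
  set seg : Set.Icc (0:ℝ) 1 → E2 :=
    fun u => y + (((u : ℝ) - t₁) / ((t₂ : ℝ) - t₁)) • (y' - y) with hsegdef
  have hseg1 : seg t₁ = y := by simp [hsegdef]
  have hseg2 : seg t₂ = y' := by
    simp only [hsegdef]
    rw [div_self (by linarith), one_smul]
    abel
  set γ' : Set.Icc (0:ℝ) 1 → E2 :=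
    fun u => if (u : ℝ) ≤ (t₁ : ℝ) then γ u else
      if (u : ℝ) ≤ (t₂ : ℝ) then seg u else γ u with hγ'def
  have hconginner : ∀ u : Set.Icc (0:ℝ) 1, (u : ℝ) = (t₂ : ℝ) → seg u = γ u := by
    intro u hu
    have : u = t₂ := Subtype.ext hu
    rw [this, hseg2]
  have hsegcont : Continuous seg := by
    apply Continuous.add continuous_const
    exact Continuous.smul (by fun_prop : Continuous fun u : Set.Icc (0:ℝ) 1 => ((u : ℝ) - t₁) / ((t₂ : ℝ) - t₁)) continuous_const
  have hinnercont : Continuous (fun u : Set.Icc (0:ℝ) 1 =>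
      if (u : ℝ) ≤ (t₂ : ℝ) then seg u else γ u) :=
    Continuous.if_le hsegcont hγ continuous_subtype_val continuous_const hconginner
  have hγ'cont : Continuous γ' := by
    apply Continuous.if_le hγ hinnercont continuous_subtype_val continuous_const
    intro u hu
    have : u = t₁ := Subtype.ext hu
    rw [this, if_pos (le_of_lt hlt), hseg1]
  have hEqL : Set.EqOn γ' γ (Set.Icc z0 t₁) := by
    intro u hu; simp only [hγ'def]; rw [if_pos (Subtype.coe_le_coe.2 hu.2)]
  have hEqR : Set.EqOn γ' γ (Set.Icc t₂ z1) := by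
    intro u hu
    simp only [hγ'def]
    rcases le_or_gt (u : ℝ) (t₁ : ℝ) with h | h
    · exact absurd (lt_of_lt_of_le hlt (Subtype.coe_le_coe.2 hu.1)) (not_lt.2 h)
    · rw [if_neg (not_le.2 h)]
      rcases le_or_gt (u : ℝ) (t₂ : ℝ) with h2 | h2
      · rw [if_pos h2]; exact hconginner u (le_antisymm h2 (Subtype.coe_le_coe.2 hu.1))
      · rw [if_neg (not_le.2 h2)]
  have hEqM : Set.EqOn γ' seg (Set.Icc t₁ t₂) := by
    intro u hu
    simp only [hγ'def]
    rcases le_or_gt (u : ℝ) (t₁ : ℝ) with h | h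
    · have he : u = t₁ := Subtype.ext (le_antisymm h (Subtype.coe_le_coe.2 hu.1))
      rw [if_pos h, he, hseg1]
    · rw [if_neg (not_le.2 h), if_pos (Subtype.coe_le_coe.2 hu.2)]
  have hγ'0 : γ' z0 = s := by
    simp only [hγ'def]
    rw [if_pos t₁.2.1]
    exact h0
  have hγ'1 : γ' z1 = t := by
    simp only [hγ'def]
    have h1' : ¬ ((1:ℝ) ≤ (t₁ : ℝ)) := not_le.2 (lt_of_lt_of_le hlt t₂.2.2)
    rw [if_neg h1']
    rcases le_or_gt (1:ℝ) (t₂ : ℝ) with h2 | h2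
    · rw [if_pos h2, hconginner z1 (le_antisymm t₂.2.2 h2).symm]; exact h1
    · rw [if_neg (not_le.2 h2)]; exact h1
  have hγ'ran : Set.range γ' ⊆ P := by
    rintro _ ⟨u, rfl⟩
    simp only [hγ'def]
    split_ifs with h h2
    · exact hran ⟨u, rfl⟩
    · apply hvis
      rw [segment_eq_image']
      refine ⟨((u : ℝ) - t₁) / ((t₂ : ℝ) - t₁), ⟨?_, ?_⟩, rfl⟩
      · exact div_nonneg (by linarith [not_le.1 h]) (by linarith)
      · rw [div_le_one (by linarith)]; linarith
    · exact hran ⟨u, rfl⟩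
  have hmid : eVariationOn γ' (Set.Icc t₁ t₂) ≤ edist y y' := by
    rw [eVariationOn.eq_of_eqOn hEqM]
    set φ : Set.Icc (0:ℝ) 1 → ℝ := fun u => ((u : ℝ) - t₁) / ((t₂ : ℝ) - t₁) with hφdef
    have hc : (0:ℝ) < (t₂ : ℝ) - t₁ := by linarith
    have hφmono : MonotoneOn φ (Set.Icc t₁ t₂) := by
      intro a _ b _ hab
      have hab' : (a : ℝ) ≤ b := Subtype.coe_le_coe.2 hab
      exact (div_le_div_iff_of_pos_right hc).2 (by linarith)
    have hcomp : seg = (fun θ : ℝ => y + θ • (y' - y)) ∘ φ := rfl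
    rw [hcomp, eVariationOn.comp_eq_of_monotoneOn _ φ hφmono]
    refine le_trans (eVariationOn.mono _ ?_) (line_var_le y y')
    rintro _ ⟨u, hu, rfl⟩
    have hu1 : (t₁ : ℝ) ≤ u := Subtype.coe_le_coe.2 hu.1
    have hu2 : (u : ℝ) ≤ t₂ := Subtype.coe_le_coe.2 hu.2
    constructor
    · exact div_nonneg (by linarith) (by linarith)
    · rw [div_le_one hc]; linarith
  set A := eVariationOn γ (Set.Icc z0 t₁) with hA
  set B := eVariationOn γ (Set.Icc t₁ t₂) with hB
  set C := eVariationOn γ (Set.Icc t₂ z1) with hC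
  have hAC_lt : A + C < ⊤ := by
    have hA' : A ≤ eVariationOn γ Set.univ := eVariationOn.mono γ (Set.subset_univ _)
    have hC' : C ≤ eVariationOn γ Set.univ := eVariationOn.mono γ (Set.subset_univ _)
    calc A + C ≤ eVariationOn γ Set.univ + eVariationOn γ Set.univ := add_le_add hA' hC'
      _ < ⊤ := by rw [ENNReal.add_lt_top]; exact ⟨hfin, hfin⟩
  have hγ'total : eVariationOn γ' Set.univ ≤ A + edist y y' + C := by
    rw [hsplit γ', eVariationOn.eq_of_eqOn hEqL, eVariationOn.eq_of_eqOn hEqR]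
    gcongr
  have hgeo : eVariationOn γ Set.univ ≤ eVariationOn γ' Set.univ := by
    rw [hshortest]
    exact sInf_le ⟨γ', hγ'cont, hγ'ran, hγ'0, hγ'1, rfl⟩
  have hBle : B ≤ edist y y' := by
    have h' : A + B + C ≤ A + edist y y' + C := by
      rw [← hsplit γ]; exact hgeo.trans hγ'total
    have h'' : B + (A + C) ≤ edist y y' + (A + C) := by
      calc B + (A + C) = A + B + C := by ring
        _ ≤ A + edist y y' + C := h'
        _ = edist y y' + (A + C) := by ring
    exact (ENNReal.add_le_add_iff_right hAC_lt.ne).1 h''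
  have hBge : edist y y' ≤ B :=
    eVariationOn.edist_le γ (Set.left_mem_Icc.2 h12) (Set.right_mem_Icc.2 h12)
  have hBeq : B = edist y y' := le_antisymm hBle hBge
  refine ⟨hBeq, ?_⟩
  have hseg_mem : ∀ u : Set.Icc (0:ℝ) 1, u ∈ Set.Icc t₁ t₂ → γ u ∈ segment ℝ y y' := by
    intro u hu
    have e1 : edist y (γ u) ≤ eVariationOn γ (Set.Icc t₁ u) :=
      eVariationOn.edist_le γ (Set.left_mem_Icc.2 hu.1) (Set.right_mem_Icc.2 hu.1)
    have e2 : edist (γ u) y' ≤ eVariationOn γ (Set.Icc u t₂) :=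
      eVariationOn.edist_le γ (Set.left_mem_Icc.2 hu.2) (Set.right_mem_Icc.2 hu.2)
    have esum : eVariationOn γ (Set.Icc t₁ u) + eVariationOn γ (Set.Icc u t₂) = B := by
      have := eVariationOn.Icc_add_Icc γ (s := Set.univ) hu.1 hu.2 (Set.mem_univ u)
      simpa using this
    have hle : edist y (γ u) + edist (γ u) y' ≤ edist y y' := by
      calc edist y (γ u) + edist (γ u) y' ≤
          eVariationOn γ (Set.Icc t₁ u) + eVariationOn γ (Set.Icc u t₂) := add_le_add e1 e2
        _ = B := esum
        _ = edist y y' := hBeq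
    have hdist : dist y (γ u) + dist (γ u) y' = dist y y' := by
      refine le_antisymm ?_ (dist_triangle y (γ u) y')
      rw [edist_dist, edist_dist, edist_dist,
        ← ENNReal.ofReal_add dist_nonneg dist_nonneg] at hle
      exact (ENNReal.ofReal_le_ofReal_iff dist_nonneg).1 hle
    rw [mem_segment_iff_wbtw, ← dist_add_dist_eq_iff]
    exact hdist
  intro z hz
  rcases eq_or_ne y y' with hyy | hyy
  · rw [← hyy, segment_same] at hz
    exact ⟨t₁, hz.symm⟩
  have hD : (0:ℝ) < dist y y' := dist_pos.2 hyy
  have hnorm : ‖y' - y‖ = dist y y' := by rw [dist_eq_norm, norm_sub_rev]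
  have hdist_aff : ∀ θ : ℝ, 0 ≤ θ → dist y (y + θ • (y' - y)) = θ * dist y y' := by
    intro θ hθ
    rw [dist_eq_norm']
    simp [norm_smul, abs_of_nonneg hθ, hnorm]
  rw [segment_eq_image'] at hz
  obtain ⟨θ, hθ, rfl⟩ := hz
  set g : ℝ → ℝ := fun r => dist y (γ (Set.projIcc 0 1 zero_le_one r)) with hg
  have hgc : Continuous g :=
    Continuous.dist continuous_const (hγ.comp continuous_projIcc)
  have hg1 : g (t₁ : ℝ) = 0 := by
    simp [hg, Set.projIcc_val zero_le_one t₁]; rfl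
  have hg2 : g (t₂ : ℝ) = dist y y' := by
    simp [hg, Set.projIcc_val zero_le_one t₂]; rfl
  have hmemIcc : θ * dist y y' ∈ Set.Icc (g (t₁ : ℝ)) (g (t₂ : ℝ)) := by
    rw [hg1, hg2]
    constructor
    · exact mul_nonneg hθ.1 hD.le
    · nlinarith [hθ.2]
  obtain ⟨r, hr, hgr⟩ := intermediate_value_Icc (le_of_lt hlt) hgc.continuousOn hmemIcc
  have hrmem : r ∈ Set.Icc (0:ℝ) 1 := ⟨le_trans t₁.2.1 hr.1, le_trans hr.2 t₂.2.2⟩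
  set u : Set.Icc (0:ℝ) 1 := ⟨r, hrmem⟩ with hu
  have hproj : Set.projIcc 0 1 zero_le_one r = u := Set.projIcc_of_mem zero_le_one hrmem
  have humem : u ∈ Set.Icc t₁ t₂ := ⟨hr.1, hr.2⟩
  have hdu : dist y (γ u) = θ * dist y y' := by
    rw [← hgr]; simp [hg, hproj]
  obtain ⟨θ', hθ', hrep⟩ := segment_eq_image' ℝ y y' ▸ hseg_mem u humem
  have hd'u : dist y (γ u) = θ' * dist y y' := by
    rw [← hrep]; exact hdist_aff θ' hθ'.1
  have hθθ : θ' = θ := by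
    have := hd'u.symm.trans hdu
    exact mul_right_cancel₀ hD.ne' this
  exact ⟨u, by rw [← hrep, hθθ]⟩
end
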